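/- arXiv:1310.5313 — 4 statements merged into one kernel-verified Lean document; each statement's English description precedes it below -/
import Mathlib

section
/- For any signed permutation σ = σ₁σ₂⋯σₙ on {1,…,n} (each σᵢ is ±π(i) for a permutation π), the generating function ∑_{t≥0} Ω_σ(t) x^t equals x^{des_B(σ)} / (1-x)^{n+1}, where Ω_σ(t) is the number of σ-compatible maps g with g(σ₁) ≤ t, as a formal power series identity. -/
open Finset

/-- Type B descent number of a signed word `σ : Fin m → ℤ`:
counts `i` with `σ i > σ (i+1)`, plus 1 if the last entry is positive. -/
def desB {m : ℕ} (σ : Fin m → ℤ) : ℕ :=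
  (Finset.univ.filter fun i : Fin m =>
    (if h : (i : ℕ) + 1 < m then σ ⟨(i : ℕ) + 1, h⟩ else 0) < σ i).card

/-- Ascent number of an `s`-inversion sequence `e` (with `s` 1-indexed),
using the convention `e₀ = 0`, `s₀ = 1`. -/
def asc {m : ℕ} (s : ℕ → ℕ) (e : Fin m → ℕ) : ℕ :=
  (Finset.univ.filter fun i : Fin m =>
    (if (i : ℕ) = 0 then (0 : ℚ)
     else (e ⟨(i : ℕ) - 1, Nat.lt_of_le_of_lt (Nat.sub_le _ _) i.isLt⟩ : ℚ) / s (i : ℕ))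
      < (e i : ℚ) / s ((i : ℕ) + 1)).card

/-- The finset of `s`-inversion sequences of length `m` (with `s` 1-indexed). -/
def invSeqs (s : ℕ → ℕ) (m : ℕ) : Finset (Fin m → ℕ) :=
  Fintype.piFinset fun i => Finset.range (s ((i : ℕ) + 1))

/-- `s = (1,4,3,8,5,12,…)`: `s_{2i-1} = 2i-1`, `s_{2i} = 4i` (1-indexed). -/
def sA (k : ℕ) : ℕ := if k % 2 = 1 then k else 2 * k

/-- `s = (2,2,6,4,10,6,…)`: `s_{2i-1} = 4i-2`, `s_{2i} = 2i` (1-indexed). -/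
def sB (k : ℕ) : ℕ := if k % 2 = 1 then 2 * k else k

/-- `s' = (1,1,3,2,5,3,…)`: `s'_{2i-1} = 2i-1`, `s'_{2i} = i` (1-indexed). -/
def sC (k : ℕ) : ℕ := if k % 2 = 1 then k else k / 2

/-- The lecture hall counting function `f_n^{(s)}(t)`: the number of `n`-tuples
`(λ₁,…,λₙ)` of nonnegative integers with `0 ≤ λ₁/s₁ ≤ ⋯ ≤ λₙ/sₙ ≤ t`. -/
def lhall (s : ℕ → ℕ) (n t : ℕ) : ℕ :=
  ((Fintype.piFinset fun i : Fin n => Finset.range (t * s ((i : ℕ) + 1) + 1)).filter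
    fun lam => ∀ i : Fin n, ∀ h : (i : ℕ) + 1 < n,
      lam i * s ((i : ℕ) + 2) ≤ lam ⟨(i : ℕ) + 1, h⟩ * s ((i : ℕ) + 1)).card

/-- The finset of signed permutations of length `m` on a multiset `M` of
positive integers: words `σ` whose multiset of absolute values is `M`. -/
def sperm (m : ℕ) (M : Multiset ℤ) : Finset (Fin m → ℤ) :=
  (Fintype.piFinset fun _ : Fin m => M.toFinset ∪ M.toFinset.image (fun x => -x)).filter
    fun σ => (Finset.univ.val.map fun i => |σ i|) = M

/-- The multiset `{1,1,2,2,…,n,n}`. -/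
def Pmult (n : ℕ) : Multiset ℤ :=
  (Multiset.range n).bind fun k => {(k : ℤ) + 1, (k : ℤ) + 1}

/-- The multiset `{1,1,2,2,…,n-1,n-1,n}`. -/
def Umult (n : ℕ) : Multiset ℤ :=
  ((Multiset.range (n - 1)).bind fun k => {(k : ℤ) + 1, (k : ℤ) + 1}) + {(n : ℤ)}

/-- `P_n`: signed permutations on `{1²,2²,…,n²}`. -/
def Pset (n : ℕ) : Finset (Fin (2 * n) → ℤ) := sperm (2 * n) (Pmult n)

/-- `U_n`: signed permutations on `{1²,2²,…,(n-1)²,n}`. -/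
def Uset (n : ℕ) : Finset (Fin (2 * n - 1) → ℤ) := sperm (2 * n - 1) (Umult n)

/-- `V_n`: signed permutations on `{1²,2²,…,(n-1)²,n}` where `n` carries a minus sign. -/
def Vset (n : ℕ) : Finset (Fin (2 * n - 1) → ℤ) :=
  (Uset n).filter fun σ => ∀ i, |σ i| = (n : ℤ) → σ i < 0

/-- `Ω_σ(t)`: the number of `σ`-compatible maps `g` with `g(σ₁) ≤ t`, recorded
as the tuple `(g(σ₁),…,g(σₙ))`. -/
def Omega {n : ℕ} (σ : Fin n → ℤ) (t : ℕ) : ℕ :=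
  ((Fintype.piFinset fun _ : Fin n => Finset.range (t + 1)).filter fun g =>
    (∀ i : Fin n, ∀ h : (i : ℕ) + 1 < n,
      g ⟨(i : ℕ) + 1, h⟩ ≤ g i ∧ (σ ⟨(i : ℕ) + 1, h⟩ < σ i → g ⟨(i : ℕ) + 1, h⟩ < g i)) ∧
    (∀ i : Fin n, (i : ℕ) = n - 1 → 0 < σ i → 1 ≤ g i)).card

/-- Linear extensions of the plane forest `F_n` consisting of `n` two-vertex trees:
`π j` is the vertex placed at position `j`, where the root of the `i`-th tree is
vertex `2i` and its child is vertex `2i+1`; roots must precede their children. -/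
def linExts (n : ℕ) : Finset (Equiv.Perm (Fin (2 * n))) :=
  Finset.univ.filter fun π => ∀ i : Fin n,
    π.symm ⟨2 * (i : ℕ), by have := i.isLt; omega⟩ <
      π.symm ⟨2 * (i : ℕ) + 1, by have := i.isLt; omega⟩

/-- The signed labelings `L(F_n)`: for each `i` (0-indexed), the labels of the root
and the child of the `i`-th tree form one of the four allowed pairs. -/
noncomputable def labelings (n : ℕ) : Finset (Fin (2 * n) → ℤ) :=
  (Fintype.piFinset fun _ : Fin (2 * n) => Finset.Icc (-(2 * n : ℤ)) (2 * n)).filter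
    fun w => ∀ i : Fin n,
      (w ⟨2 * (i : ℕ), by have := i.isLt; omega⟩,
       w ⟨2 * (i : ℕ) + 1, by have := i.isLt; omega⟩) ∈
        ({(2 * (i : ℤ) + 2, 2 * (i : ℤ) + 1), (2 * (i : ℤ) + 2, -(2 * (i : ℤ) + 1)),
          (-(2 * (i : ℤ) + 2), 2 * (i : ℤ) + 1), (-(2 * (i : ℤ) + 1), -(2 * (i : ℤ) + 2))} :
          Finset (ℤ × ℤ))

/-- The descent statistic `|{i : σᵢ > σᵢ₊₁}| + [σ₁ < 0]`. -/
def desA {m : ℕ} (σ : Fin m → ℤ) : ℕ :=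
  (Finset.univ.filter fun i : Fin m =>
    if h : (i : ℕ) + 1 < m then σ ⟨(i : ℕ) + 1, h⟩ < σ i else False).card
  + (Finset.univ.filter fun i : Fin m => (i : ℕ) = 0 ∧ σ i < 0).card

/-- The map `σ₁⋯σₙ ↦ (−σₙ)(−σₙ₋₁)⋯(−σ₁)`. -/
def revNeg {m : ℕ} (σ : Fin m → ℤ) : Fin m → ℤ := fun i => -σ i.rev

open Polynomial PowerSeries

/-- Weakly decreasing tuples of length `n` with entries `≤ M`. -/
def decrSet (n M : ℕ) : Finset (Fin n → ℕ) :=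
  (Fintype.piFinset fun _ : Fin n => Finset.range (M + 1)).filter fun h =>
    ∀ i : Fin n, ∀ hh : (i : ℕ) + 1 < n, h ⟨(i : ℕ) + 1, hh⟩ ≤ h i

lemma chain_anti {n : ℕ} {h : Fin n → ℕ}
    (hc : ∀ i : Fin n, ∀ hh : (i : ℕ) + 1 < n, h ⟨(i : ℕ) + 1, hh⟩ ≤ h i)
    {i j : Fin n} (hij : i ≤ j) : h j ≤ h i := by
  obtain ⟨i, hi⟩ := i; obtain ⟨j, hj⟩ := j
  rw [Fin.mk_le_mk] at hij
  induction j with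
  | zero =>
    obtain rfl : i = 0 := by omega
    exact le_refl _
  | succ j ih =>
    rcases Nat.eq_or_lt_of_le hij with rfl | hlt
    · exact le_refl _
    · have hj' : j < n := by omega
      exact le_trans (hc ⟨j, hj'⟩ hj) (ih hj' (by omega))

lemma smono_gap {n : ℕ} {f : Fin n → ℕ} (hf : StrictMono f) {i j : Fin n} (hij : i ≤ j) :
    f i + ((j : ℕ) - (i : ℕ)) ≤ f j := by
  obtain ⟨i, hi⟩ := i; obtain ⟨j, hj⟩ := j
  rw [Fin.mk_le_mk] at hij
  induction j with
  | zero =>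
    obtain rfl : i = 0 := by omega
    simp
  | succ j ih =>
    rcases Nat.eq_or_lt_of_le hij with rfl | hlt
    · simp
    · have hj' : j < n := by omega
      have h1 := ih hj' (by omega)
      have h2 : f ⟨j, hj'⟩ < f ⟨j + 1, hj⟩ := hf (by simp [Fin.mk_lt_mk])
      simp only [Fin.val_mk] at h1 ⊢
      omega

lemma smono_le {n : ℕ} {f : Fin n → ℕ} (hf : StrictMono f) (i : Fin n) : (i : ℕ) ≤ f i := by
  have h0 : (⟨0, i.pos⟩ : Fin n) ≤ i := by simp [Fin.le_def]
  have := smono_gap hf h0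
  simp only [Fin.val_mk, Nat.sub_zero] at this
  omega

lemma decrSet_card (n M : ℕ) : (decrSet n M).card = (M + n).choose n := by
  have hpow := Finset.card_powersetCard n (Finset.range (M + n))
  rw [Finset.card_range] at hpow
  rw [← hpow]
  have hrev : ∀ (i : Fin n), ((i.rev : ℕ)) = n - 1 - (i : ℕ) := by
    intro i; rw [Fin.val_rev]; omega
  refine Finset.card_bij'
    (i := fun h _ => Finset.image (fun i : Fin n => h i + (n - 1 - (i : ℕ))) Finset.univ)
    (j := fun s _ => fun i : Fin n =>
      if hc : s.card = n then s.orderEmbOfFin hc i.rev - (n - 1 - (i : ℕ)) else 0)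
    ?_ ?_ ?_ ?_
  · -- forward into target
    intro h hh
    simp only [decrSet, Finset.mem_filter, Fintype.mem_piFinset] at hh
    obtain ⟨hmem, hdec⟩ := hh
    have hanti : StrictAnti (fun i : Fin n => h i + (n - 1 - (i : ℕ))) := by
      intro i j hij
      have h1 : h j ≤ h i := chain_anti hdec (le_of_lt hij)
      have h2 : (i : ℕ) < (j : ℕ) := hij
      have h3 : (j : ℕ) < n := j.isLt
      show h j + (n - 1 - (j : ℕ)) < h i + (n - 1 - (i : ℕ))
      omega
    rw [Finset.mem_powersetCard]
    constructor
    · intro x hx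
      simp only [Finset.mem_image, Finset.mem_univ, true_and] at hx
      obtain ⟨i, rfl⟩ := hx
      have := hmem i
      rw [Finset.mem_range] at this
      rw [Finset.mem_range]
      have := i.isLt
      omega
    · rw [Finset.card_image_of_injective _ hanti.injective, Finset.card_univ, Fintype.card_fin]
  · -- backward into source
    intro s hs
    have hcard := (Finset.mem_powersetCard.mp hs).2
    have hsub := (Finset.mem_powersetCard.mp hs).1
    simp only [dif_pos hcard]
    have hmono : StrictMono (fun i : Fin n => (s.orderEmbOfFin hcard i : ℕ)) :=
      (s.orderEmbOfFin hcard).strictMono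
    have hub : ∀ i : Fin n, (s.orderEmbOfFin hcard i : ℕ) < M + n := fun i => by
      have := hsub (Finset.orderEmbOfFin_mem s hcard i)
      rwa [Finset.mem_range] at this
    have hlo : ∀ i : Fin n, (i : ℕ) ≤ s.orderEmbOfFin hcard i := fun i => smono_le hmono i
    simp only [decrSet, Finset.mem_filter, Fintype.mem_piFinset]
    constructor
    · intro i
      rw [Finset.mem_range]
      have hn : 0 < n := i.pos
      have hlast : i.rev ≤ (⟨n - 1, by omega⟩ : Fin n) := by
        rw [Fin.le_def, hrev]
        simp only [Fin.val_mk]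
        omega
      have hgap := smono_gap hmono hlast
      have h1 := hub ⟨n - 1, by omega⟩
      have h2 := hrev i
      have h3 := i.isLt
      simp only [Fin.val_mk] at hgap
      omega
    · intro i hh
      have hlt : (⟨(i : ℕ) + 1, hh⟩ : Fin n).rev < i.rev := by
        rw [Fin.lt_def, hrev, hrev]
        simp only [Fin.val_mk]
        have := i.isLt
        omega
      have hm := hmono hlt
      have hlo1 := hlo ((⟨(i : ℕ) + 1, hh⟩ : Fin n).rev)
      have hlo2 := hlo i.rev
      rw [hrev] at hlo1 hlo2
      simp only [Fin.val_mk] at hlo1 hm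
      have := i.isLt
      omega
  · -- left inverse
    intro h hh
    simp only [decrSet, Finset.mem_filter, Fintype.mem_piFinset] at hh
    obtain ⟨hmem, hdec⟩ := hh
    have hanti : StrictAnti (fun i : Fin n => h i + (n - 1 - (i : ℕ))) := by
      intro a b hab
      have h1 : h b ≤ h a := chain_anti hdec (le_of_lt hab)
      have h2 : (a : ℕ) < (b : ℕ) := hab
      have h3 : (b : ℕ) < n := b.isLt
      show h b + (n - 1 - (b : ℕ)) < h a + (n - 1 - (a : ℕ))
      omega
    have hcard : (Finset.image (fun i : Fin n => h i + (n - 1 - (i : ℕ))) Finset.univ).card = n := by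
      rw [Finset.card_image_of_injective _ hanti.injective, Finset.card_univ, Fintype.card_fin]
    funext i
    simp only [dif_pos hcard]
    have huniq := Finset.orderEmbOfFin_unique
      (f := fun x : Fin n => h x.rev + (n - 1 - (x.rev : ℕ))) hcard
      (fun x => Finset.mem_image.mpr ⟨x.rev, Finset.mem_univ _, rfl⟩)
      (by
        intro a b hab
        have hba : b.rev < a.rev := by
          rw [Fin.lt_def, hrev, hrev]
          have := b.isLt
          have h2 : (a : ℕ) < (b : ℕ) := hab
          omega
        exact hanti hba)
    have hval := congrFun huniq i.rev
    simp only [Fin.rev_rev] at hval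
    rw [← hval]
    omega
  · -- right inverse
    intro s hs
    have hcard := (Finset.mem_powersetCard.mp hs).2
    have hsub := (Finset.mem_powersetCard.mp hs).1
    simp only [dif_pos hcard]
    have hmono : StrictMono (fun i : Fin n => (s.orderEmbOfFin hcard i : ℕ)) :=
      (s.orderEmbOfFin hcard).strictMono
    have hlo : ∀ i : Fin n, (i : ℕ) ≤ s.orderEmbOfFin hcard i := fun i => smono_le hmono i
    have hsimp : (fun i : Fin n => (s.orderEmbOfFin hcard i.rev - (n - 1 - (i : ℕ))) + (n - 1 - (i : ℕ)))
        = fun i : Fin n => (s.orderEmbOfFin hcard i.rev : ℕ) := by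
      funext i
      have := hlo i.rev
      rw [hrev] at this
      omega
    rw [hsimp]
    apply Finset.eq_of_subset_of_card_le
    · intro x hx
      simp only [Finset.mem_image, Finset.mem_univ, true_and] at hx
      obtain ⟨i, rfl⟩ := hx
      exact Finset.orderEmbOfFin_mem s hcard i.rev
    · rw [hcard]
      have hinj : Function.Injective (fun i : Fin n => (s.orderEmbOfFin hcard i.rev : ℕ)) := by
        intro a b hab
        have := hmono.injective hab
        exact Fin.rev_injective this
      rw [Finset.card_image_of_injective _ hinj, Finset.card_univ, Fintype.card_fin]


/-- The descent indicator at position `j`. -/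
def bP {n : ℕ} (σ : Fin n → ℤ) (j : Fin n) : Prop :=
  (if h : (j : ℕ) + 1 < n then σ ⟨(j : ℕ) + 1, h⟩ else 0) < σ j

instance {n : ℕ} (σ : Fin n → ℤ) : DecidablePred (bP σ) := fun j => by
  unfold bP; infer_instance

/-- Number of descents at positions `≥ k`. -/
def cF {n : ℕ} (σ : Fin n → ℤ) (k : ℕ) : ℕ :=
  (Finset.univ.filter fun j : Fin n => k ≤ (j : ℕ) ∧ bP σ j).card

lemma cF_zero {n : ℕ} (σ : Fin n → ℤ) : cF σ 0 = desB σ := by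
  unfold cF desB bP
  congr 1
  apply Finset.filter_congr
  intro j _
  simp

lemma cF_ge {n : ℕ} (σ : Fin n → ℤ) {k : ℕ} (hk : n ≤ k) : cF σ k = 0 := by
  unfold cF
  rw [Finset.card_eq_zero, Finset.filter_eq_empty_iff]
  intro j _
  have := j.isLt
  rintro ⟨h1, -⟩
  omega

lemma cF_step {n : ℕ} (σ : Fin n → ℤ) {k : ℕ} (hk : k < n) :
    cF σ k = cF σ (k + 1) + (if bP σ ⟨k, hk⟩ then 1 else 0) := by
  unfold cF
  have hsplit : (Finset.univ.filter fun j : Fin n => k ≤ (j : ℕ) ∧ bP σ j)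
      = (Finset.univ.filter fun j : Fin n => k + 1 ≤ (j : ℕ) ∧ bP σ j)
        ∪ (Finset.univ.filter fun j : Fin n => (j : ℕ) = k ∧ bP σ j) := by
    ext j
    simp only [Finset.mem_union, Finset.mem_filter, Finset.mem_univ, true_and]
    constructor
    · rintro ⟨h1, h2⟩
      rcases Nat.eq_or_lt_of_le h1 with h | h
      · exact Or.inr ⟨h.symm, h2⟩
      · exact Or.inl ⟨h, h2⟩
    · rintro (⟨h1, h2⟩ | ⟨h1, h2⟩)
      · exact ⟨by omega, h2⟩
      · exact ⟨by omega, h2⟩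
  rw [hsplit, Finset.card_union_of_disjoint]
  · congr 1
    split_ifs with hb
    · rw [Finset.card_eq_one]
      refine ⟨⟨k, hk⟩, ?_⟩
      ext j
      simp only [Finset.mem_filter, Finset.mem_univ, true_and, Finset.mem_singleton]
      constructor
      · rintro ⟨h1, h2⟩
        exact Fin.ext h1
      · rintro rfl
        exact ⟨rfl, hb⟩
    · rw [Finset.card_eq_zero, Finset.filter_eq_empty_iff]
      rintro j - ⟨h1, h2⟩
      apply hb
      have : j = (⟨k, hk⟩ : Fin n) := Fin.ext h1
      rwa [this] at h2
  · rw [Finset.disjoint_left]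
    intro j hj1 hj2
    simp only [Finset.mem_filter, Finset.mem_univ, true_and] at hj1 hj2
    omega

lemma cF_anti {n : ℕ} (σ : Fin n → ℤ) {k l : ℕ} (h : k ≤ l) : cF σ l ≤ cF σ k := by
  apply Finset.card_le_card
  intro j hj
  simp only [Finset.mem_filter, Finset.mem_univ, true_and] at hj ⊢
  exact ⟨by omega, hj.2⟩

section OmegaLemmas

variable {n : ℕ} {σ : Fin n → ℤ} {t : ℕ} {g : Fin n → ℕ}

lemma cF_le_g
    (hg1 : ∀ i : Fin n, ∀ h : (i : ℕ) + 1 < n,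
      g ⟨(i : ℕ) + 1, h⟩ ≤ g i ∧ (σ ⟨(i : ℕ) + 1, h⟩ < σ i → g ⟨(i : ℕ) + 1, h⟩ < g i))
    (hg2 : ∀ i : Fin n, (i : ℕ) = n - 1 → 0 < σ i → 1 ≤ g i) :
    ∀ (k : ℕ) (hk : k < n), cF σ k ≤ g ⟨k, hk⟩ := by
  have main : ∀ (m k : ℕ) (hk : k < n), k + m + 1 = n → cF σ k ≤ g ⟨k, hk⟩ := by
    intro m
    induction m with
    | zero =>
      intro k hk hkm
      rw [cF_step σ hk, cF_ge σ (show n ≤ k + 1 by omega)]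
      split_ifs with hb
      · have hb' : 0 < σ ⟨k, hk⟩ := by
          unfold bP at hb
          rwa [dif_neg (show ¬((⟨k, hk⟩ : Fin n) : ℕ) + 1 < n by simp only [Fin.val_mk]; omega)]
            at hb
        have := hg2 ⟨k, hk⟩ (by simp only [Fin.val_mk]; omega) hb'
        omega
      · simp
    | succ m ih =>
      intro k hk hkm
      have hk1 : k + 1 < n := by omega
      have h1 : cF σ (k + 1) ≤ g ⟨k + 1, hk1⟩ := ih (k + 1) hk1 (by omega)
      have h2 : g ⟨k + 1, hk1⟩ ≤ g ⟨k, hk⟩ ∧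
          (σ ⟨k + 1, hk1⟩ < σ ⟨k, hk⟩ → g ⟨k + 1, hk1⟩ < g ⟨k, hk⟩) := hg1 ⟨k, hk⟩ hk1
      rw [cF_step σ hk]
      split_ifs with hb
      · have hb' : σ ⟨k + 1, hk1⟩ < σ ⟨k, hk⟩ := by
          unfold bP at hb
          rwa [dif_pos (show ((⟨k, hk⟩ : Fin n) : ℕ) + 1 < n from hk1)] at hb
        have := h2.2 hb'
        omega
      · have := h2.1
        omega
  intro k hk
  exact main (n - k - 1) k hk (by omega)

lemma step_ineq
    (hg1 : ∀ i : Fin n, ∀ h : (i : ℕ) + 1 < n,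
      g ⟨(i : ℕ) + 1, h⟩ ≤ g i ∧ (σ ⟨(i : ℕ) + 1, h⟩ < σ i → g ⟨(i : ℕ) + 1, h⟩ < g i))
    (k : ℕ) (hk : k < n) (hk1 : k + 1 < n) :
    g ⟨k + 1, hk1⟩ + cF σ k ≤ g ⟨k, hk⟩ + cF σ (k + 1) := by
  have h2 : g ⟨k + 1, hk1⟩ ≤ g ⟨k, hk⟩ ∧
      (σ ⟨k + 1, hk1⟩ < σ ⟨k, hk⟩ → g ⟨k + 1, hk1⟩ < g ⟨k, hk⟩) := hg1 ⟨k, hk⟩ hk1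
  rw [cF_step σ hk]
  split_ifs with hb
  · have hb' : σ ⟨k + 1, hk1⟩ < σ ⟨k, hk⟩ := by
      unfold bP at hb
      rwa [dif_pos (show ((⟨k, hk⟩ : Fin n) : ℕ) + 1 < n from hk1)] at hb
    have := h2.2 hb'
    omega
  · have := h2.1
    omega

lemma g_bound
    (hg0 : ∀ i : Fin n, g i < t + 1)
    (hg1 : ∀ i : Fin n, ∀ h : (i : ℕ) + 1 < n,
      g ⟨(i : ℕ) + 1, h⟩ ≤ g i ∧ (σ ⟨(i : ℕ) + 1, h⟩ < σ i → g ⟨(i : ℕ) + 1, h⟩ < g i)) :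
    ∀ (k : ℕ) (hk : k < n), g ⟨k, hk⟩ + cF σ 0 ≤ t + cF σ k := by
  intro k
  induction k with
  | zero =>
    intro hk
    have := hg0 ⟨0, hk⟩
    omega
  | succ k ih =>
    intro hk
    have hk' : k < n := by omega
    have ihh := ih hk'
    have hstep := step_ineq hg1 k hk' hk
    omega

end OmegaLemmas

lemma Omega_eq {n : ℕ} (hn : 1 ≤ n) (σ : Fin n → ℤ) (t : ℕ) :
    Omega σ t = if t < desB σ then 0 else (t - desB σ + n).choose n := by
  rw [← cF_zero σ]
  split_ifs with ht
  · unfold Omega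
    rw [Finset.card_eq_zero, Finset.filter_eq_empty_iff]
    intro g hg
    rintro ⟨hg1, hg2⟩
    rw [Fintype.mem_piFinset] at hg
    have hg0 : ∀ i : Fin n, g i < t + 1 := fun i => Finset.mem_range.mp (hg i)
    have hle := cF_le_g hg1 hg2 0 hn
    have h0 := hg0 ⟨0, hn⟩
    omega
  · rw [← decrSet_card n (t - cF σ 0)]
    unfold Omega
    refine Finset.card_bij'
      (i := fun g _ => fun i : Fin n => g i - cF σ (i : ℕ))
      (j := fun h _ => fun i : Fin n => h i + cF σ (i : ℕ)) ?_ ?_ ?_ ?_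
    · -- forward into decrSet
      intro g hg
      rw [Finset.mem_filter, Fintype.mem_piFinset] at hg
      obtain ⟨hg0', ⟨hg1, hg2⟩⟩ := hg
      have hg0 : ∀ i : Fin n, g i < t + 1 := fun i => Finset.mem_range.mp (hg0' i)
      have hle := cF_le_g hg1 hg2
      have hbd := g_bound hg0 hg1
      simp only [decrSet, Finset.mem_filter, Fintype.mem_piFinset]
      constructor
      · intro i
        rw [Finset.mem_range]
        have h1 := hbd (i : ℕ) i.isLt
        have h2 := hle (i : ℕ) i.isLt
        have h3 : cF σ (i : ℕ) ≤ cF σ 0 := cF_anti σ (Nat.zero_le _)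
        simp only [Fin.eta] at h1 h2
        omega
      · intro i hh
        have h1 := step_ineq hg1 (i : ℕ) i.isLt hh
        have h2 := hle ((i : ℕ) + 1) hh
        have h3 := hle (i : ℕ) i.isLt
        simp only [Fin.eta] at h1 h2 h3
        omega
    · -- backward into Omega set
      intro h hh
      simp only [decrSet, Finset.mem_filter, Fintype.mem_piFinset] at hh
      obtain ⟨hmem', hdec⟩ := hh
      have hmem : ∀ i : Fin n, h i < t - cF σ 0 + 1 := fun i => Finset.mem_range.mp (hmem' i)
      rw [Finset.mem_filter, Fintype.mem_piFinset]
      refine ⟨?_, ?_, ?_⟩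
      · intro i
        rw [Finset.mem_range]
        have h1 := hmem i
        have h2 : cF σ (i : ℕ) ≤ cF σ 0 := cF_anti σ (Nat.zero_le _)
        omega
      · intro i hh'
        have h1 := hdec i hh'
        have h2 : cF σ ((i : ℕ) + 1) ≤ cF σ (i : ℕ) := cF_anti σ (by omega)
        simp only []
        constructor
        · omega
        · intro hlt
          have hb : bP σ ⟨(i : ℕ), i.isLt⟩ := by
            simp only [Fin.eta]
            unfold bP
            rwa [dif_pos hh']
          have hstep := cF_step σ i.isLt
          rw [if_pos hb] at hstep
          omega
      · intro i hi hpos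
        simp only []
        have hk : (i : ℕ) < n := i.isLt
        have hb : bP σ ⟨(i : ℕ), i.isLt⟩ := by
          simp only [Fin.eta]
          unfold bP
          rw [dif_neg (show ¬(i : ℕ) + 1 < n by omega)]
          exact hpos
        have hstep := cF_step σ i.isLt
        rw [if_pos hb] at hstep
        omega
    · -- left inverse
      intro g hg
      rw [Finset.mem_filter, Fintype.mem_piFinset] at hg
      obtain ⟨hg0', ⟨hg1, hg2⟩⟩ := hg
      have hle := cF_le_g hg1 hg2
      funext i
      have h2 := hle (i : ℕ) i.isLt
      simp only [Fin.eta] at h2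
      simp only []
      omega
    · -- right inverse
      intro h hh
      funext i
      simp only []
      omega


theorem stmt4 (n : ℕ) (hn : 1 ≤ n) (σ : Fin n → ℤ)
    (hval : ∀ i, 1 ≤ |σ i| ∧ |σ i| ≤ (n : ℤ))
    (hinj : Function.Injective fun i => |σ i|) :
    (PowerSeries.mk fun t => (Omega σ t : ℤ)) * (1 - PowerSeries.X) ^ (n + 1)
      = (PowerSeries.X : PowerSeries ℤ) ^ desB σ := by
  have key : (PowerSeries.mk fun t => (Omega σ t : ℤ))
      = PowerSeries.X ^ desB σ * PowerSeries.mk fun t => ((Nat.choose (n + t) n : ℤ)) := by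
    ext t
    rw [PowerSeries.coeff_mk, PowerSeries.coeff_X_pow_mul', Omega_eq hn σ t]
    split_ifs with h1 h2
    · omega
    · rfl
    · rw [PowerSeries.coeff_mk]
      norm_cast
      rw [Nat.add_comm]
    · omega
  rw [key, mul_assoc, PowerSeries.mk_add_choose_mul_one_sub_pow_eq_one, mul_one]
end

section
/- For a signed permutation σ on {1,…,n} and a nonnegative integer t, the number of σ-compatible maps g with g(σ₁) ≤ t equals the binomial coefficient C(n + t - des_B(σ), n). -/
open Finset

open Polynomial PowerSeries

-- hockey stick with truncated subtraction
lemma omega_hockey (N d : ℕ) (hN : 1 ≤ N) (T : ℕ) :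
    ∑ j ∈ Finset.range T, (N + j - d).choose N = (N + T - d).choose (N + 1) := by
  induction T with
  | zero =>
      rw [Finset.sum_range_zero]
      exact (Nat.choose_eq_zero_of_lt (by omega)).symm
  | succ T ih =>
      rw [Finset.sum_range_succ, ih]
      rcases le_or_gt d T with hd | hd
      · have h1 : N + (T + 1) - d = (N + T - d) + 1 := by omega
        rw [h1, Nat.choose_succ_succ]
        simp only [Nat.succ_eq_add_one]
        omega
      · have h0 : (N + T - d).choose (N + 1) = 0 := Nat.choose_eq_zero_of_lt (by omega)
        have h1 : (N + T - d).choose N = 0 := Nat.choose_eq_zero_of_lt (by omega)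
        have h2 : (N + (T + 1) - d).choose (N + 1) = 0 := Nat.choose_eq_zero_of_lt (by omega)
        omega

lemma compat_anti {m : ℕ} {g : Fin m → ℕ}
    (hg : ∀ i : Fin m, ∀ h : (i : ℕ) + 1 < m, g ⟨(i : ℕ) + 1, h⟩ ≤ g i)
    {a b : ℕ} (hab : a ≤ b) (hb : b < m) (ha : a < m) : g ⟨b, hb⟩ ≤ g ⟨a, ha⟩ := by
  induction b with
  | zero =>
      have : a = 0 := by omega
      subst this; exact le_rfl
  | succ b ih =>
      rcases Nat.eq_or_lt_of_le hab with rfl | h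
      · exact le_rfl
      · have hb' : b < m := by omega
        have step : g ⟨b + 1, hb⟩ ≤ g ⟨b, hb'⟩ := hg ⟨b, hb'⟩ hb
        exact le_trans step (ih (by omega) hb')

lemma mem_omega_iff {m : ℕ} (σ : Fin m → ℤ) (t : ℕ) (g : Fin m → ℕ) :
    (g ∈ (Fintype.piFinset fun _ : Fin m => Finset.range (t + 1)).filter fun g =>
      (∀ i : Fin m, ∀ h : (i : ℕ) + 1 < m,
        g ⟨(i : ℕ) + 1, h⟩ ≤ g i ∧ (σ ⟨(i : ℕ) + 1, h⟩ < σ i → g ⟨(i : ℕ) + 1, h⟩ < g i)) ∧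
      (∀ i : Fin m, (i : ℕ) = m - 1 → 0 < σ i → 1 ≤ g i)) ↔
    ((∀ a, ∀ h : a < m, g ⟨a, h⟩ ≤ t) ∧
      (∀ a, ∀ h : a < m, ∀ h2 : a + 1 < m,
        g ⟨a + 1, h2⟩ ≤ g ⟨a, h⟩ ∧
          (σ ⟨a + 1, h2⟩ < σ ⟨a, h⟩ → g ⟨a + 1, h2⟩ < g ⟨a, h⟩)) ∧
      (∀ a, ∀ h : a < m, a = m - 1 → 0 < σ ⟨a, h⟩ → 1 ≤ g ⟨a, h⟩)) := by
  simp only [Finset.mem_filter, Fintype.mem_piFinset, Finset.mem_range, Nat.lt_succ_iff,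
    Fin.forall_iff, and_assoc]


lemma fiber_card (n : ℕ) (hn : 1 ≤ n) (σ : Fin (n + 1) → ℤ) (t k k' : ℕ) (hk : k ≤ t)
    (hk' : k = k' + (if σ 1 < σ 0 then 1 else 0)) :
    (((Fintype.piFinset fun _ : Fin (n + 1) => Finset.range (t + 1)).filter fun g =>
      (∀ i : Fin (n + 1), ∀ h : (i : ℕ) + 1 < n + 1,
        g ⟨(i : ℕ) + 1, h⟩ ≤ g i ∧ (σ ⟨(i : ℕ) + 1, h⟩ < σ i → g ⟨(i : ℕ) + 1, h⟩ < g i)) ∧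
      (∀ i : Fin (n + 1), (i : ℕ) = n + 1 - 1 → 0 < σ i → 1 ≤ g i)).filter
        fun g => g 0 = k).card
    = Omega (fun j : Fin n => σ j.succ) k' := by
  have p1 : (1 : ℕ) < n + 1 := by omega
  have e1 : (1 : Fin (n + 1)) = ⟨1, p1⟩ := Fin.ext (by simp [Fin.val_one']; omega)
  have hkk : k = k' + (if σ ⟨1, p1⟩ < σ 0 then 1 else 0) := by rw [← e1]; exact hk'
  rw [Omega]
  apply Finset.card_bij' (fun g _ => fun j : Fin n => g j.succ)
    (fun g' _ => Fin.cons k g')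
  case hi =>
    intro g hg
    rw [Finset.mem_filter] at hg
    obtain ⟨hg1, h0⟩ := hg
    obtain ⟨hb, hc, hl⟩ := (mem_omega_iff σ t g).mp hg1
    have hmono : ∀ i : Fin (n + 1), ∀ h : (i : ℕ) + 1 < n + 1, g ⟨(i : ℕ) + 1, h⟩ ≤ g i :=
      fun i h => (hc i.val i.isLt h).1
    have hc0 : g ⟨1, p1⟩ ≤ g 0 ∧ (σ ⟨1, p1⟩ < σ 0 → g ⟨1, p1⟩ < g 0) :=
      hc 0 (by omega) (by omega)
    have g1le : g ⟨1, p1⟩ ≤ k' := by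
      split_ifs at hkk with hP
      · have := hc0.2 hP
        omega
      · have := hc0.1
        omega
    refine (mem_omega_iff (fun j : Fin n => σ j.succ) k' _).mpr ⟨?_, ?_, ?_⟩
    · intro a h
      show g ⟨a + 1, by omega⟩ ≤ k'
      exact le_trans (compat_anti hmono (by omega) (by omega) p1) g1le
    · intro a h h2
      exact hc (a + 1) (by omega) (by omega)
    · intro a h ha hpos
      exact hl (a + 1) (by omega) (by omega) hpos
  case hj =>
    intro g' hg'
    obtain ⟨hb', hc', hl'⟩ := (mem_omega_iff (fun j : Fin n => σ j.succ) k' g').mp hg'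
    rw [Finset.mem_filter]
    refine ⟨(mem_omega_iff σ t _).mpr ⟨?_, ?_, ?_⟩, Fin.cons_zero _ _⟩
    · intro a h
      match a, h with
      | 0, h =>
        show k ≤ t
        exact hk
      | a + 1, h =>
        show g' ⟨a, by omega⟩ ≤ t
        have := hb' a (by omega)
        omega
    · intro a h h2
      match a, h, h2 with
      | 0, h, h2 =>
        show g' ⟨0, by omega⟩ ≤ k ∧ (σ ⟨1, by omega⟩ < σ ⟨0, by omega⟩ → g' ⟨0, by omega⟩ < k)
        have hb0 := hb' 0 (by omega)
        constructor
        · omega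
        · intro hP
          have hP' : σ ⟨1, p1⟩ < σ 0 := hP
          rw [if_pos hP'] at hkk
          omega
      | a + 1, h, h2 =>
        show g' ⟨a + 1, by omega⟩ ≤ g' ⟨a, by omega⟩ ∧
          (σ ⟨a + 2, by omega⟩ < σ ⟨a + 1, by omega⟩ →
            g' ⟨a + 1, by omega⟩ < g' ⟨a, by omega⟩)
        exact hc' a (by omega) (by omega)
    · intro a h ha hpos
      match a, h with
      | 0, h => omega
      | a + 1, h =>
        show 1 ≤ g' ⟨a, by omega⟩
        exact hl' a (by omega) (by omega) hpos
  case left_inv =>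
    intro g hg
    have h0 : g 0 = k := (Finset.mem_filter.mp hg).2
    funext i
    refine Fin.cases ?_ (fun j => ?_) i
    · rw [Fin.cons_zero, h0]
    · rw [Fin.cons_succ]
  case right_inv =>
    intro g' _
    funext j
    exact Fin.cons_succ _ _ _

lemma fiber_zero (n : ℕ) (hn : 1 ≤ n) (σ : Fin (n + 1) → ℤ) (t : ℕ) (hP : σ 1 < σ 0) :
    (((Fintype.piFinset fun _ : Fin (n + 1) => Finset.range (t + 1)).filter fun g =>
      (∀ i : Fin (n + 1), ∀ h : (i : ℕ) + 1 < n + 1,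
        g ⟨(i : ℕ) + 1, h⟩ ≤ g i ∧ (σ ⟨(i : ℕ) + 1, h⟩ < σ i → g ⟨(i : ℕ) + 1, h⟩ < g i)) ∧
      (∀ i : Fin (n + 1), (i : ℕ) = n + 1 - 1 → 0 < σ i → 1 ≤ g i)).filter
        fun g => g 0 = 0).card = 0 := by
  have p1 : (1 : ℕ) < n + 1 := by omega
  have e1 : (1 : Fin (n + 1)) = ⟨1, p1⟩ := Fin.ext (by simp [Fin.val_one']; omega)
  rw [Finset.card_eq_zero, Finset.eq_empty_iff_forall_notMem]
  intro g hg
  rw [Finset.mem_filter] at hg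
  obtain ⟨hg1, h0⟩ := hg
  obtain ⟨hb, hc, hl⟩ := (mem_omega_iff σ t g).mp hg1
  have hc0 : g ⟨1, p1⟩ ≤ g 0 ∧ (σ ⟨1, p1⟩ < σ 0 → g ⟨1, p1⟩ < g 0) :=
    hc 0 (by omega) (by omega)
  have hP' : σ ⟨1, p1⟩ < σ 0 := by rw [← e1]; exact hP
  have := hc0.2 hP'
  omega

lemma Omega_succ (n : ℕ) (hn : 1 ≤ n) (σ : Fin (n + 1) → ℤ) (t : ℕ) :
    Omega σ t = ∑ k ∈ Finset.range (t + 1),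
      (if σ 1 < σ 0 then (if k = 0 then 0 else Omega (fun j : Fin n => σ j.succ) (k - 1))
       else Omega (fun j : Fin n => σ j.succ) k) := by
  rw [Omega]
  rw [Finset.card_eq_sum_card_fiberwise (f := fun g => g 0) (t := Finset.range (t + 1))
    (fun g hg => Finset.mem_range.mpr (Nat.lt_succ_of_le
      (((mem_omega_iff σ t g).mp hg).1 0 (by omega))))]
  apply Finset.sum_congr rfl
  intro k hk
  rw [Finset.mem_range] at hk
  by_cases hP : σ 1 < σ 0
  · rw [if_pos hP]
    rcases Nat.eq_zero_or_pos k with rfl | hk0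
    · rw [if_pos rfl]
      exact fiber_zero n hn σ t hP
    · rw [if_neg (by omega)]
      exact fiber_card n hn σ t k (k - 1) (by omega) (by rw [if_pos hP]; omega)
  · rw [if_neg hP]
    exact fiber_card n hn σ t k k (by omega) (by rw [if_neg hP]; omega)

lemma desB_succ (n : ℕ) (hn : 1 ≤ n) (σ : Fin (n + 1) → ℤ) :
    desB σ = desB (fun j : Fin n => σ j.succ) + (if σ 1 < σ 0 then 1 else 0) := by
  have p1 : (1 : ℕ) < n + 1 := by omega
  have e1 : (1 : Fin (n + 1)) = ⟨1, p1⟩ := Fin.ext (by simp [Fin.val_one']; omega)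
  rw [desB, desB, Finset.card_filter, Finset.card_filter, Fin.sum_univ_succ]
  rw [dif_pos (show ((0 : Fin (n + 1)) : ℕ) + 1 < n + 1 by simp only [Fin.val_zero]; omega)]
  simp only [Fin.val_zero]
  have e : ∀ h : 0 + 1 < n + 1, σ ⟨0 + 1, h⟩ = σ 1 := fun h => by
    rw [e1]
  simp only [e (by omega)]
  have hsum : (∑ i : Fin n, if (if h : ((i.succ : Fin (n + 1)) : ℕ) + 1 < n + 1
        then σ ⟨((i.succ : Fin (n + 1)) : ℕ) + 1, h⟩ else 0) < σ i.succ then 1 else 0)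
      = ∑ i : Fin n, (if (if h : (i : ℕ) + 1 < n
        then σ (⟨(i : ℕ) + 1, h⟩ : Fin n).succ else 0) < σ i.succ then 1 else 0) := by
    apply Finset.sum_congr rfl
    intro i _
    by_cases hlt : (i : ℕ) + 1 < n
    · rw [dif_pos (show ((i.succ : Fin (n + 1)) : ℕ) + 1 < n + 1 by
        simp [Fin.val_succ]; omega), dif_pos hlt]
      rfl
    · rw [dif_neg (show ¬(((i.succ : Fin (n + 1)) : ℕ) + 1 < n + 1) by
        simp [Fin.val_succ]; omega), dif_neg hlt]
  rw [hsum]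
  omega

lemma omega_base (σ : Fin 1 → ℤ) (t : ℕ) : Omega σ t = (1 + t - desB σ).choose 1 := by
  have hdes : desB σ = if 0 < σ 0 then 1 else 0 := by
    rw [desB, Finset.card_filter, Fin.sum_univ_one,
      dif_neg (show ¬(((0 : Fin 1) : ℕ) + 1 < 1) by omega)]
  rw [Omega, hdes]
  by_cases hP : 0 < σ 0
  · rw [if_pos hP]
    have hcard : ((Fintype.piFinset fun _ : Fin 1 => Finset.range (t + 1)).filter fun g =>
        (∀ i : Fin 1, ∀ h : (i : ℕ) + 1 < 1,
          g ⟨(i : ℕ) + 1, h⟩ ≤ g i ∧ (σ ⟨(i : ℕ) + 1, h⟩ < σ i → g ⟨(i : ℕ) + 1, h⟩ < g i)) ∧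
        (∀ i : Fin 1, (i : ℕ) = 1 - 1 → 0 < σ i → 1 ≤ g i)).card = (Finset.Icc 1 t).card := by
      apply Finset.card_nbij' (fun g => g 0) (fun c _ => c)
      · intro g hg
        rw [Finset.mem_coe, Finset.mem_filter] at hg
        obtain ⟨hg1, _, hg2⟩ := hg
        rw [Fintype.mem_piFinset] at hg1
        have h1 := hg1 0
        rw [Finset.mem_range] at h1
        have h2 := hg2 0 rfl hP
        simp only [Finset.mem_coe, Finset.mem_Icc]
        omega
      · intro c hc
        rw [Finset.mem_coe, Finset.mem_Icc] at hc
        simp only [Finset.mem_coe, Finset.mem_filter]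
        refine ⟨Fintype.mem_piFinset.mpr fun _ => Finset.mem_range.mpr (by omega),
          fun i h => absurd h (by omega), fun i _ _ => ?_⟩
        exact hc.1
      · intro g hg
        funext i
        have : i = 0 := Subsingleton.elim _ _
        subst this
        rfl
      · intro c _
        rfl
    rw [hcard, Nat.card_Icc, Nat.choose_one_right, Nat.add_comm 1 t]
  · rw [if_neg hP]
    have hall : ∀ g ∈ (Fintype.piFinset fun _ : Fin 1 => Finset.range (t + 1)),
        (∀ i : Fin 1, ∀ h : (i : ℕ) + 1 < 1,
          g ⟨(i : ℕ) + 1, h⟩ ≤ g i ∧ (σ ⟨(i : ℕ) + 1, h⟩ < σ i → g ⟨(i : ℕ) + 1, h⟩ < g i)) ∧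
        (∀ i : Fin 1, (i : ℕ) = 1 - 1 → 0 < σ i → 1 ≤ g i) := by
      intro g _
      refine ⟨fun i h => absurd h (by omega), fun i hi hpos => ?_⟩
      have : i = 0 := Subsingleton.elim _ _
      subst this
      exact absurd hpos hP
    rw [Finset.filter_true_of_mem hall]
    rw [Fintype.card_piFinset]
    rw [Fin.prod_univ_one, Finset.card_range, Nat.choose_one_right, Nat.sub_zero,
      Nat.add_comm 1 t]

lemma omega_main : ∀ n, 1 ≤ n → ∀ σ : Fin n → ℤ, ∀ t, Omega σ t = (n + t - desB σ).choose n := by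
  intro n
  induction n with
  | zero => intro h; omega
  | succ n ih =>
    intro _ σ t
    rcases Nat.eq_zero_or_pos n with rfl | hn
    · exact omega_base σ t
    · rw [Omega_succ n hn σ t, desB_succ n hn σ]
      by_cases hP : σ 1 < σ 0
      · simp only [if_pos hP]
        rw [Finset.sum_range_succ', if_pos rfl, add_zero]
        rw [Finset.sum_congr rfl (fun j _ =>
          show (if j + 1 = 0 then 0 else Omega (fun j : Fin n => σ j.succ) (j + 1 - 1))
              = (n + j - desB (fun j : Fin n => σ j.succ)).choose n from by
            rw [if_neg (Nat.succ_ne_zero j), Nat.add_sub_cancel]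
            exact ih hn (fun j : Fin n => σ j.succ) j)]
        rw [omega_hockey n (desB fun j : Fin n => σ j.succ) hn t]
        congr 1
        omega
      · simp only [if_neg hP]
        rw [Finset.sum_congr rfl (fun j _ => ih hn (fun j : Fin n => σ j.succ) j)]
        rw [omega_hockey n (desB fun j : Fin n => σ j.succ) hn (t + 1)]
        congr 1
        omega

theorem stmt5 (n : ℕ) (hn : 1 ≤ n) (σ : Fin n → ℤ)
    (hval : ∀ i, 1 ≤ |σ i| ∧ |σ i| ≤ (n : ℤ))
    (hinj : Function.Injective fun i => |σ i|) (t : ℕ) :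
    Omega σ t = (n + t - desB σ).choose n :=
  omega_main n hn σ t
end

section
/- For every n ≥ 1, ∑_{σ∈V_n} x^{des_B(σ)} / (1−x)^{2n} = ∑_{t≥0} (t+1)^n (2t+1)^{n−1} x^t as formal power series, where V_n is the set of signed permutations on {1²,…,(n−1)²,n} with the entry n negative. -/
open Finset

open Polynomial PowerSeries

noncomputable section
open scoped Classical

section chains
variable {β : Type*} [Preorder β] {m : ℕ} {f : Fin m → β}

lemma chain_mono (hf : ∀ (i : ℕ) (h : i + 1 < m), f ⟨i, Nat.lt_of_succ_lt h⟩ ≤ f ⟨i+1, h⟩) :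
    ∀ (a b : ℕ) (ha : a < m) (hb : b < m), a ≤ b → f ⟨a, ha⟩ ≤ f ⟨b, hb⟩ := by
  intro a b
  induction b with
  | zero =>
    intro ha hb hab
    have h0 : a = 0 := by omega
    subst h0
    exact le_refl _
  | succ b ih =>
    intro ha hb hab
    rcases Nat.eq_or_lt_of_le hab with h | h
    · subst h; exact le_refl _
    · exact le_trans (ih ha (by omega) (by omega)) (hf b hb)

lemma chain_anti_s12 (hf : ∀ (i : ℕ) (h : i + 1 < m), f ⟨i+1, h⟩ ≤ f ⟨i, Nat.lt_of_succ_lt h⟩) :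
    ∀ (a b : ℕ) (ha : a < m) (hb : b < m), a ≤ b → f ⟨b, hb⟩ ≤ f ⟨a, ha⟩ :=
  chain_mono (β := βᵒᵈ) (f := f) hf

end chains

lemma chain_strict_nat {m : ℕ} {f : Fin m → ℕ}
    (hf : ∀ (i : ℕ) (h : i + 1 < m), f ⟨i, Nat.lt_of_succ_lt h⟩ < f ⟨i+1, h⟩) :
    ∀ (a b : ℕ) (ha : a < m) (hb : b < m), a ≤ b → f ⟨a, ha⟩ + (b - a) ≤ f ⟨b, hb⟩ := by
  intro a b
  induction b with
  | zero =>
    intro ha hb hab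
    have h0 : a = 0 := by omega
    subst h0
    simp
  | succ b ih =>
    intro ha hb hab
    rcases Nat.eq_or_lt_of_le hab with h | h
    · subst h; simp
    · have h1 := ih ha (by omega) (by omega)
      have h2 := hf b hb
      omega

/-- the descent set of a signed word (including the final-positive condition) -/
def Dset {m : ℕ} (σ : Fin m → ℤ) : Finset (Fin m) :=
  Finset.univ.filter fun i : Fin m =>
    (if h : (i : ℕ) + 1 < m then σ ⟨(i : ℕ) + 1, h⟩ else 0) < σ i

lemma desB_eq_card_Dset {m : ℕ} (σ : Fin m → ℤ) : desB σ = (Dset σ).card := rfl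

/-- number of descents at positions `≥ k` -/
def cf {m : ℕ} (σ : Fin m → ℤ) (k : ℕ) : ℕ :=
  ((Dset σ).filter fun j : Fin m => k ≤ j.1).card

lemma cf_zero {m : ℕ} (σ : Fin m → ℤ) : cf σ 0 = desB σ := by
  unfold cf
  rw [Finset.filter_true_of_mem (fun x _ => Nat.zero_le _)]
  rfl

lemma cf_le {m : ℕ} (σ : Fin m → ℤ) (k : ℕ) : cf σ k ≤ desB σ :=
  Finset.card_le_card (Finset.filter_subset _ _)

lemma cf_anti {m : ℕ} (σ : Fin m → ℤ) {k l : ℕ} (h : k ≤ l) : cf σ l ≤ cf σ k :=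
  Finset.card_le_card (Finset.monotone_filter_right _ (fun j _ (hj : l ≤ j.1) => le_trans h hj))

lemma cf_succ {m : ℕ} (σ : Fin m → ℤ) (k : ℕ) (hk : k + 1 < m) :
    cf σ k = cf σ (k+1) +
      (if σ ⟨k+1, hk⟩ < σ ⟨k, Nat.lt_of_succ_lt hk⟩ then 1 else 0) := by
  classical
  unfold cf
  have h1 : ((Dset σ).filter fun j : Fin m => k ≤ j.1)
      = ((Dset σ).filter fun j : Fin m => (k+1 ≤ j.1 ∨ j.1 = k)) :=
    Finset.filter_congr (fun j _ => by omega)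
  have hk' : k < m := Nat.lt_of_succ_lt hk
  rw [h1, Finset.filter_or, Finset.card_union_of_disjoint (by
    rw [Finset.disjoint_left]
    intro j hj1 hj2
    simp only [Finset.mem_filter] at hj1 hj2
    omega)]
  congr 1
  by_cases hd : σ ⟨k+1, hk⟩ < σ ⟨k, hk'⟩
  · rw [if_pos hd]
    have : (Dset σ).filter (fun j : Fin m => j.1 = k) = {⟨k, hk'⟩} := by
      ext j
      simp only [Finset.mem_filter, Finset.mem_singleton, Dset, Finset.mem_univ, true_and]
      constructor
      · rintro ⟨_, hj⟩; exact Fin.ext hj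
      · rintro rfl; exact ⟨by rw [dif_pos hk]; exact hd, rfl⟩
    rw [this, Finset.card_singleton]
  · rw [if_neg hd]
    have : (Dset σ).filter (fun j : Fin m => j.1 = k) = ∅ := by
      ext j
      simp only [Finset.mem_filter, Finset.notMem_empty, iff_false, not_and, Dset,
        Finset.mem_univ, true_and]
      intro hj hjk
      have hj' : j = ⟨k, hk'⟩ := Fin.ext hjk
      subst hj'
      rw [dif_pos hk] at hj
      exact hd hj
    rw [this, Finset.card_empty]

lemma cf_last {m : ℕ} (σ : Fin m → ℤ) (hm : 0 < m) :
    cf σ (m-1) = if 0 < σ ⟨m-1, by omega⟩ then 1 else 0 := by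
  classical
  unfold cf
  by_cases hd : 0 < σ ⟨m-1, by omega⟩
  · rw [if_pos hd]
    have : (Dset σ).filter (fun j : Fin m => m - 1 ≤ j.1) = {⟨m-1, by omega⟩} := by
      ext j
      simp only [Finset.mem_filter, Finset.mem_singleton, Dset, Finset.mem_univ, true_and]
      constructor
      · rintro ⟨_, hj⟩
        exact Fin.ext (show (j : ℕ) = m - 1 by have := j.isLt; omega)
      · rintro rfl
        refine ⟨?_, le_refl _⟩
        rw [dif_neg (show ¬ (m - 1 + 1 < m) by omega)]
        exact hd
    rw [this, Finset.card_singleton]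
  · rw [if_neg hd]
    have : (Dset σ).filter (fun j : Fin m => m - 1 ≤ j.1) = ∅ := by
      ext j
      simp only [Finset.mem_filter, Finset.notMem_empty, iff_false, not_and, Dset,
        Finset.mem_univ, true_and]
      intro hj hjk
      have hj' : j = ⟨m-1, by omega⟩ :=
        Fin.ext (show (j : ℕ) = m - 1 by have := j.isLt; omega)
      rw [dif_neg (show ¬ ((j:ℕ) + 1 < m) by have := j.isLt; omega)] at hj
      exact hd (by rwa [hj'] at hj)
    rw [this, Finset.card_empty]

/-- the set of `σ`-compatible chains bounded by `t` -/
def GS {m : ℕ} (σ : Fin m → ℤ) (t : ℕ) : Finset (Fin m → ℕ) :=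
  (Fintype.piFinset fun _ : Fin m => Finset.range (t+1)).filter fun g =>
    (∀ (i : ℕ) (h : i + 1 < m),
        g ⟨i+1, h⟩ ≤ g ⟨i, Nat.lt_of_succ_lt h⟩ ∧
        (σ ⟨i+1, h⟩ < σ ⟨i, Nat.lt_of_succ_lt h⟩ → g ⟨i+1, h⟩ < g ⟨i, Nat.lt_of_succ_lt h⟩)) ∧
    (∀ hm : 0 < m, 0 < σ ⟨m-1, by omega⟩ → 1 ≤ g ⟨m-1, by omega⟩)

lemma mem_GS {m t : ℕ} {σ : Fin m → ℤ} {g : Fin m → ℕ} :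
    g ∈ GS σ t ↔ (∀ i : Fin m, g i ≤ t) ∧
      (∀ (i : ℕ) (h : i + 1 < m), g ⟨i+1, h⟩ ≤ g ⟨i, Nat.lt_of_succ_lt h⟩ ∧
        (σ ⟨i+1, h⟩ < σ ⟨i, Nat.lt_of_succ_lt h⟩ → g ⟨i+1, h⟩ < g ⟨i, Nat.lt_of_succ_lt h⟩)) ∧
      (∀ hm : 0 < m, 0 < σ ⟨m-1, by omega⟩ → 1 ≤ g ⟨m-1, by omega⟩) := by
  unfold GS
  rw [Finset.mem_filter, Fintype.mem_piFinset]
  try simp only [Finset.mem_range, Nat.lt_succ_iff]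
  try tauto

lemma GS_lower {m t : ℕ} {σ : Fin m → ℤ} {g : Fin m → ℕ} (hg : g ∈ GS σ t) :
    ∀ (k : ℕ) (hk : k < m), cf σ k ≤ g ⟨k, hk⟩ := by
  obtain ⟨hb, hadj, hlast⟩ := mem_GS.mp hg
  have H : ∀ j k (hk : k < m), m - k ≤ j → cf σ k ≤ g ⟨k, hk⟩ := by
    intro j
    induction j with
    | zero => intro k hk hj; omega
    | succ j ih =>
      intro k hk hj
      by_cases h1 : k + 1 < m
      · have h2 := ih (k+1) h1 (by omega)
        have h3 := cf_succ σ k h1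
        have h4 := hadj k h1
        by_cases hd : σ ⟨k+1, h1⟩ < σ ⟨k, Nat.lt_of_succ_lt h1⟩
        · rw [if_pos hd] at h3
          have := h4.2 hd
          omega
        · rw [if_neg hd] at h3
          have := h4.1
          omega
      · have hk1 : k = m - 1 := by omega
        subst hk1
        rw [cf_last σ (by omega)]
        by_cases hd : 0 < σ ⟨m-1, by omega⟩
        · rw [if_pos hd]
          exact hlast (by omega) hd
        · rw [if_neg hd]; omega
  exact fun k hk => H m k hk (by omega)

/-- weakly decreasing maps `Fin m → [0, N]` -/
def AS (m N : ℕ) : Finset (Fin m → ℕ) :=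
  (Fintype.piFinset fun _ : Fin m => Finset.range (N+1)).filter fun h =>
    ∀ (i : ℕ) (hh : i + 1 < m), h ⟨i+1, hh⟩ ≤ h ⟨i, Nat.lt_of_succ_lt hh⟩

lemma mem_AS {m N : ℕ} {h : Fin m → ℕ} :
    h ∈ AS m N ↔ (∀ i : Fin m, h i ≤ N) ∧
      ∀ (i : ℕ) (hh : i + 1 < m), h ⟨i+1, hh⟩ ≤ h ⟨i, Nat.lt_of_succ_lt hh⟩ := by
  unfold AS
  rw [Finset.mem_filter, Fintype.mem_piFinset]
  simp only [Finset.mem_range, Nat.lt_succ_iff]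

lemma getD_chain {m : ℕ} {l : List ℕ} (hlen : l.length = m)
    (hsorted : List.Pairwise (· < ·) l) :
    ∀ (a b : ℕ), a < m → b < m → a ≤ b →
      l.getD a 0 + (b - a) ≤ l.getD b 0 := by
  subst hlen
  have hf : ∀ (i : ℕ) (hi : i + 1 < l.length),
      (fun i : Fin l.length => l.getD i.1 0) ⟨i, Nat.lt_of_succ_lt hi⟩ <
      (fun i : Fin l.length => l.getD i.1 0) ⟨i+1, hi⟩ := by
    intro i hi
    simp only
    rw [List.getD_eq_getElem l 0 (by omega), List.getD_eq_getElem l 0 (by omega)]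
    have hp := List.pairwise_iff_get.mp hsorted
    have := hp ⟨i, by omega⟩ ⟨i+1, by omega⟩ (by simp [Fin.lt_def])
    simpa using this
  have hchain := chain_strict_nat (f := fun i : Fin l.length => l.getD i.1 0) hf
  intro a b ha hb hab
  exact hchain a b ha hb hab

lemma AS_card (m N : ℕ) : (AS m N).card = (N + m).choose m := by
  have key : (AS m N).card = (Finset.powersetCard m (Finset.range (N+m))).card := by
    apply Finset.card_nbij'
      (i := fun h => Finset.univ.image fun i : Fin m => h i + (m - 1 - i.1))
      (j := fun S => fun i : Fin m =>
        (Finset.sort S (·≤·)).getD (m - 1 - i.1) 0 - (m - 1 - i.1))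
    · -- forward maps to
      intro h hh
      obtain ⟨hb, hadj⟩ := mem_AS.mp hh
      rw [Finset.mem_coe, Finset.mem_powersetCard]
      constructor
      · intro x hx
        simp only [Finset.mem_image, Finset.mem_univ, true_and] at hx
        obtain ⟨i, rfl⟩ := hx
        rw [Finset.mem_range]
        have := hb i
        have := i.isLt
        omega
      · have hkey : ∀ i j : Fin m, i < j →
            h j + (m - 1 - j.1) < h i + (m - 1 - i.1) := by
          intro i j hij
          have h1 : h j ≤ h i := chain_anti_s12 hadj i.1 j.1 i.isLt j.isLt (le_of_lt hij)
          have := i.isLt; have := j.isLt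
          have hij' : i.1 < j.1 := hij
          omega
        rw [Finset.card_image_of_injOn, Finset.card_univ, Fintype.card_fin]
        intro i _ j _ heq
        by_contra hne
        rcases lt_or_gt_of_ne (fun hc : i = j => hne hc) with hlt | hlt
        · exact absurd heq (Nat.ne_of_gt (hkey i j hlt))
        · exact absurd heq (Nat.ne_of_lt (hkey j i hlt))
    · -- backward maps to
      intro S hS
      rw [Finset.mem_coe, Finset.mem_powersetCard] at hS
      obtain ⟨hsub, hcard⟩ := hS
      have hlen : (Finset.sort S (·≤·)).length = m := by
        rw [Finset.length_sort]; exact hcard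
      have hchain := getD_chain hlen ((Finset.sortedLT_sort S).pairwise)
      have hmem : ∀ (j : ℕ), j < m → (Finset.sort S (·≤·)).getD j 0 < N + m := by
        intro j hj
        have h2 : (Finset.sort S (·≤·)).getD j 0 ∈ S := by
          rw [List.getD_eq_getElem _ 0 (by omega)]
          exact (Finset.mem_sort (α := ℕ) (·≤·)).mp (List.getElem_mem (by omega))
        have h3 := hsub h2
        rwa [Finset.mem_range] at h3
      rw [Finset.mem_coe, mem_AS]
      constructor
      · intro i
        have hi := i.isLt
        have h1 := hchain (m - 1 - i.1) (m-1) (by omega) (by omega) (by omega)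
        have h2 := hmem (m-1) (by omega)
        beta_reduce
        omega
      · intro i hi
        have h1 := hchain (m - 1 - (i+1)) (m - 1 - i) (by omega) (by omega) (by omega)
        simp only
        omega
    · -- left inverse
      intro h hh
      obtain ⟨hb, hadj⟩ := mem_AS.mp hh
      funext i
      beta_reduce
      set f := fun j : Fin m => h j + (m - 1 - j.1) with hfdef
      have hkey : ∀ a b : Fin m, a < b → f b < f a := by
        intro a b hab
        have h1 : h b ≤ h a := chain_anti_s12 hadj a.1 b.1 a.isLt b.isLt (le_of_lt hab)
        have := a.isLt; have := b.isLt
        have hab' : a.1 < b.1 := hab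
        simp only [hfdef]
        omega
      set k := fun j : Fin m => f j.rev with hkdef
      have kmono : StrictMono k := by
        intro a b hab
        exact hkey _ _ (Fin.rev_lt_rev.mpr hab)
      have hperm : ((List.ofFn k : List ℕ) : Multiset ℕ)
          = (Finset.univ.image f).val := by
        rw [Finset.image_val_of_injOn (fun a _ b _ hab => by
          by_contra hne
          rcases lt_or_gt_of_ne (fun hc : a = b => hne hc) with hlt | hlt
          · exact absurd hab (Nat.ne_of_gt (hkey a b hlt))
          · exact absurd hab (Nat.ne_of_lt (hkey b a hlt)))]
        rw [← Fin.univ_val_map]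
        have hmm : Multiset.map k Finset.univ.val
            = Multiset.map f (Multiset.map Fin.rev Finset.univ.val) := by
          rw [Multiset.map_map]; rfl
        rw [hmm]
        congr 1
        have h2 := Finset.map_univ_equiv (Fin.revPerm : Fin m ≃ Fin m)
        have h3 := congrArg Finset.val h2
        rw [Finset.map_val] at h3
        exact h3
      have hsort : Finset.sort (Finset.univ.image f) (·≤·) = List.ofFn k := by
        apply fun hp h1 h2 => List.Perm.eq_of_pairwise' (r := (· ≤ · : ℕ → ℕ → Prop)) h1 h2 hp
        · apply Multiset.coe_eq_coe.mp
          rw [Finset.sort_eq (α := ℕ) _ (·≤·)]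
          exact hperm.symm
        · exact Finset.pairwise_sort _ _
        · exact (List.sortedLE_ofFn_iff.mpr kmono.monotone).pairwise
      simp only [hsort]
      have hil : m - 1 - i.1 < (List.ofFn k).length := by
        rw [List.length_ofFn]; have := i.isLt; omega
      rw [List.getD_eq_getElem _ 0 hil, List.getElem_ofFn]
      have hrev : (⟨m - 1 - i.1, by have := i.isLt; omega⟩ : Fin m).rev = i := by
        apply Fin.ext
        rw [Fin.val_rev]
        have := i.isLt
        simp only
        omega
      simp only [hkdef, hrev, hfdef]
      have := i.isLt
      omega
    · -- right inverse
      intro S hS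
      rw [Finset.mem_coe, Finset.mem_powersetCard] at hS
      obtain ⟨hsub, hcard⟩ := hS
      have hlen : (Finset.sort S (·≤·)).length = m := by
        rw [Finset.length_sort]; exact hcard
      have hchain := getD_chain hlen ((Finset.sortedLT_sort S).pairwise)
      have hge : ∀ (j : ℕ), j < m → j ≤ (Finset.sort S (·≤·)).getD j 0 := by
        intro j hj
        have h1 := hchain 0 j (by omega) hj (by omega)
        omega
      ext a
      simp only [Finset.mem_image, Finset.mem_univ, true_and]
      constructor
      · rintro ⟨i, rfl⟩
        have hi := i.isLt
        have hge' := hge (m - 1 - i.1) (by omega)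
        have hcancel : (Finset.sort S (·≤·)).getD (m - 1 - i.1) 0 - (m - 1 - i.1)
              + (m - 1 - i.1)
            = (Finset.sort S (·≤·)).getD (m - 1 - i.1) 0 := by omega
        rw [hcancel, List.getD_eq_getElem _ 0 (by omega)]
        exact (Finset.mem_sort (α := ℕ) (·≤·)).mp (List.getElem_mem _)
      · intro ha
        have hal : a ∈ Finset.sort S (·≤·) := (Finset.mem_sort (α := ℕ) (·≤·)).mpr ha
        obtain ⟨j, hj, rfl⟩ := List.mem_iff_getElem.mp hal
        have hjm : j < m := by omega
        refine ⟨⟨m - 1 - j, by omega⟩, ?_⟩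
        have hidx : m - 1 - (m - 1 - j) = j := by omega
        simp only [hidx]
        have hgej := hge j hjm
        rw [List.getD_eq_getElem _ 0 (by omega)] at hgej ⊢
        omega
  rw [key, Finset.card_powersetCard, Finset.card_range]

theorem GS_card {m : ℕ} (hm : 0 < m) (σ : Fin m → ℤ) (t : ℕ) :
    (GS σ t).card = if desB σ ≤ t then ((t - desB σ) + m).choose m else 0 := by
  by_cases hdt : desB σ ≤ t
  · rw [if_pos hdt, ← AS_card m (t - desB σ)]
    apply Finset.card_nbij'
      (i := fun g => fun i : Fin m => g i - cf σ i.1)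
      (j := fun h => fun i : Fin m => h i + cf σ i.1)
    · -- forward
      intro g hg
      obtain ⟨hb, hadj, hlast⟩ := mem_GS.mp hg
      have hlow := GS_lower hg
      rw [Finset.mem_coe, mem_AS]
      have hadj2 : ∀ (i : ℕ) (hh : i + 1 < m),
          (fun i : Fin m => g i - cf σ i.1) ⟨i+1, hh⟩
            ≤ (fun i : Fin m => g i - cf σ i.1) ⟨i, Nat.lt_of_succ_lt hh⟩ := by
        intro i hh
        simp only
        have h3 := cf_succ σ i hh
        have h4 := hadj i hh
        have h5 := hlow (i+1) hh
        have h6 := hlow i (Nat.lt_of_succ_lt hh)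
        by_cases hd : σ ⟨i+1, hh⟩ < σ ⟨i, Nat.lt_of_succ_lt hh⟩
        · rw [if_pos hd] at h3
          have := h4.2 hd
          omega
        · rw [if_neg hd] at h3
          have := h4.1
          omega
      refine ⟨?_, hadj2⟩
      intro i
      have h1 : (fun i : Fin m => g i - cf σ i.1) i
          ≤ (fun i : Fin m => g i - cf σ i.1) ⟨0, by have := i.isLt; omega⟩ := by
        have := chain_anti_s12 (f := fun i : Fin m => g i - cf σ i.1) hadj2 0 i.1
          (by have := i.isLt; omega) i.isLt (by omega)
        simpa using this
      simp only at h1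
      have h2 := hlow 0 (by have := i.isLt; omega)
      rw [cf_zero] at h2
      have h3 := hb ⟨0, by have := i.isLt; omega⟩
      have hc0 := cf_zero σ
      beta_reduce
      omega
    · -- backward
      intro h hh
      obtain ⟨hb, hadj⟩ := mem_AS.mp hh
      rw [Finset.mem_coe, mem_GS]
      refine ⟨?_, ?_, ?_⟩
      · intro i
        have h1 := hb i
        have h2 := cf_le σ i.1
        beta_reduce
        omega
      · intro i hi
        have h3 := cf_succ σ i hi
        have h4 := hadj i hi
        constructor
        · simp only
          by_cases hd : σ ⟨i+1, hi⟩ < σ ⟨i, Nat.lt_of_succ_lt hi⟩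
          · rw [if_pos hd] at h3; omega
          · rw [if_neg hd] at h3; omega
        · intro hd
          rw [if_pos hd] at h3
          simp only
          omega
      · intro hm0 hpos
        simp only
        rw [cf_last σ hm0, if_pos hpos]
        omega
    · -- left inv
      intro g hg
      have hlow := GS_lower hg
      funext i
      simp only
      have := hlow i.1 i.isLt
      simp only [Fin.eta] at this
      omega
    · -- right inv
      intro h _
      funext i
      simp only
      omega
  · rw [if_neg hdt, Finset.card_eq_zero]
    ext g
    simp only [Finset.notMem_empty, iff_false]
    intro hg
    have h1 := GS_lower hg 0 hm
    rw [cf_zero] at h1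
    have h2 := (mem_GS.mp hg).1 ⟨0, hm⟩
    omega

/-! ## Part II: the grand bijection -/

/-- decoding of a key into (letter value, chain value) -/
def itemOf (n : ℕ) (k : ℤ) : ℤ × ℕ :=
  (k + (2*n+1) * (((n : ℤ) - k) / (2*n+1)), (((n : ℤ) - k) / (2*n+1)).toNat)

lemma itemOf_spec (n : ℕ) (v : ℤ) (g : ℕ) (h1 : -(n:ℤ) ≤ v) (h2 : v ≤ n) :
    itemOf n (v - (2*n+1) * g) = (v, g) := by
  unfold itemOf
  have hdiv : ((n:ℤ) - (v - (2*n+1)*g)) / (2*n+1) = g := by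
    have he : (n:ℤ) - (v - (2*n+1)*g) = ((n:ℤ) - v) + (2*n+1) * g := by ring
    rw [he, Int.add_mul_ediv_left _ _ (by positivity),
      Int.ediv_eq_zero_of_lt (by omega) (by omega)]
    simp
  rw [hdiv]
  have he2 : v - (2*n+1)*g + (2*n+1) * (g:ℤ) = v := by ring
  simp [he2]

lemma key_le_of (n : ℕ) {v1 v2 : ℤ} {g1 g2 : ℕ} (h1 : |v1| ≤ n) (h2 : |v2| ≤ n)
    (hg : g2 ≤ g1) (hs : v2 < v1 → g2 < g1) :
    v1 - (2*(n:ℤ)+1) * g1 ≤ v2 - (2*(n:ℤ)+1) * g2 := by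
  have ha1 := abs_le.mp h1
  have ha2 := abs_le.mp h2
  rcases Nat.lt_or_ge g2 g1 with hlt | hge
  · have hc : (g2:ℤ) + 1 ≤ g1 := by exact_mod_cast hlt
    have hmul : (2*(n:ℤ)+1) * ((g2:ℤ)+1) ≤ (2*(n:ℤ)+1) * g1 :=
      mul_le_mul_of_nonneg_left hc (by positivity)
    linarith
  · have heq : g1 = g2 := by omega
    subst heq
    have hv : v1 ≤ v2 := by
      by_contra hv
      push_neg at hv
      exact absurd (hs hv) (lt_irrefl _)
    linarith

lemma of_key_le (n : ℕ) {v1 v2 : ℤ} {g1 g2 : ℕ} (h1 : |v1| ≤ n) (h2 : |v2| ≤ n)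
    (hk : v1 - (2*(n:ℤ)+1) * g1 ≤ v2 - (2*(n:ℤ)+1) * g2) :
    g2 ≤ g1 ∧ (v2 < v1 → g2 < g1) := by
  have ha1 := abs_le.mp h1
  have ha2 := abs_le.mp h2
  have hg : g2 ≤ g1 := by
    by_contra hgc
    push_neg at hgc
    have hc : (g1:ℤ) + 1 ≤ g2 := by exact_mod_cast hgc
    have hmul : (2*(n:ℤ)+1) * ((g1:ℤ)+1) ≤ (2*(n:ℤ)+1) * g2 :=
      mul_le_mul_of_nonneg_left hc (by positivity)
    linarith
  refine ⟨hg, fun hv => ?_⟩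
  by_contra hgc
  push_neg at hgc
  have heq : g1 = g2 := by omega
  subst heq
  have : v1 ≤ v2 := by linarith
  omega

/-- key of the `c`-th code of letter `ℓ` -/
def keyOf (n t : ℕ) (ℓ : Fin n) (c : ℕ) : ℤ :=
  if ℓ.1 < n - 1 then
    (if c % 2 = 1 then ((ℓ.1 : ℤ) + 1) else -((ℓ.1 : ℤ) + 1)) - (2*(n:ℤ)+1) * ((t - c/2 : ℕ) : ℤ)
  else
    -(n : ℤ) - (2*(n:ℤ)+1) * ((t - c : ℕ) : ℤ)

def codeOf (n t : ℕ) (ℓ : Fin n) (vg : ℤ × ℕ) : ℕ :=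
  if ℓ.1 < n - 1 then 2*(t - vg.2) + (if 0 < vg.1 then 1 else 0) else t - vg.2

def codes (n t : ℕ) (ℓ : Fin n) (p : ℕ × ℕ) : Multiset ℤ :=
  if ℓ.1 < n - 1 then {keyOf n t ℓ p.1, keyOf n t ℓ p.2} else {keyOf n t ℓ p.1}

def Km (n t : ℕ) (p : Fin n → ℕ × ℕ) : Multiset ℤ :=
  ∑ ℓ : Fin n, codes n t ℓ (p ℓ)

def Pfin (n t : ℕ) : Finset (Fin n → ℕ × ℕ) :=
  Fintype.piFinset fun ℓ =>
    if ℓ.1 < n - 1 then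
      (Finset.range (2*t+1) ×ˢ Finset.range (2*t+1)).filter fun p => p.1 ≤ p.2
    else Finset.range (t+1) ×ˢ ({0} : Finset ℕ)

lemma decode_lt {n t : ℕ} (ℓ : Fin n) (hℓ : ℓ.1 < n - 1) (c : ℕ) (hc : c ≤ 2*t) :
    itemOf n (keyOf n t ℓ c)
      = ((if c % 2 = 1 then ((ℓ.1 : ℤ) + 1) else -((ℓ.1 : ℤ) + 1)), t - c/2) := by
  unfold keyOf
  rw [if_pos hℓ]
  have hb : ℓ.1 + 1 ≤ n := by omega
  apply itemOf_spec n _ _ ?_ ?_ <;> split_ifs <;> push_cast <;> omega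

lemma decode_last {n t : ℕ} (ℓ : Fin n) (hℓ : ¬ ℓ.1 < n - 1) (c : ℕ) (hc : c ≤ t) :
    itemOf n (keyOf n t ℓ c) = (-(n:ℤ), t - c) := by
  unfold keyOf
  rw [if_neg hℓ]
  apply itemOf_spec n _ _ (by omega) (by omega)

lemma encode_lt {n t : ℕ} (ℓ : Fin n) (hℓ : ℓ.1 < n - 1) (v : ℤ) (g : ℕ)
    (hv : |v| = (ℓ.1 : ℤ) + 1) (hg : g ≤ t) (hnp : 0 < v → 1 ≤ g) :
    keyOf n t ℓ (codeOf n t ℓ (v, g)) = v - (2*(n:ℤ)+1) * g := by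
  have hcode : codeOf n t ℓ (v, g) = 2*(t - g) + (if 0 < v then 1 else 0) := by
    simp [codeOf, if_pos hℓ]
  rw [hcode]
  unfold keyOf
  rw [if_pos hℓ]
  by_cases hv0 : 0 < v
  · have habs : v = (ℓ.1:ℤ)+1 := by rw [abs_of_pos hv0] at hv; omega
    have h1 := hnp hv0
    rw [if_pos hv0, if_pos (show (2*(t-g)+1) % 2 = 1 by omega),
        show (2*(t-g)+1)/2 = t - g from by omega,
        show t - (t - g) = g from by omega, habs]
  · have hvne : v ≠ 0 := by
      intro h
      rw [h] at hv
      simp at hv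
      omega
    have hvneg : v < 0 := by omega
    have habs : v = -((ℓ.1:ℤ)+1) := by rw [abs_of_neg hvneg] at hv; omega
    rw [if_neg hv0, add_zero, if_neg (show ¬ ((2*(t-g)) % 2 = 1) from by omega),
        show (2*(t-g))/2 = t - g from by omega,
        show t - (t - g) = g from by omega, habs]

lemma encode_last {n t : ℕ} (ℓ : Fin n) (hℓ : ¬ ℓ.1 < n - 1) (v : ℤ) (g : ℕ)
    (hv : v = -(n:ℤ)) (hg : g ≤ t) :
    keyOf n t ℓ (codeOf n t ℓ (v, g)) = v - (2*(n:ℤ)+1) * g := by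
  have hcode : codeOf n t ℓ (v, g) = t - g := by
    simp [codeOf, if_neg hℓ]
  rw [hcode]
  unfold keyOf
  rw [if_neg hℓ, hv]
  congr 2
  omega

section sums
variable {ι α β : Type*}

lemma map_finsum_ms (s : Finset ι) (F : ι → Multiset α) (f : α → β) :
    Multiset.map f (∑ i ∈ s, F i) = ∑ i ∈ s, Multiset.map f (F i) := by
  induction s using Finset.cons_induction with
  | empty => simp
  | cons a s ha ih => simp [Finset.sum_insert ha, Finset.sum_cons, ih, Multiset.map_add, Multiset.card_add]

lemma filter_finsum (s : Finset ι) (F : ι → Multiset α) (p : α → Prop) [DecidablePred p] :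
    Multiset.filter p (∑ i ∈ s, F i) = ∑ i ∈ s, Multiset.filter p (F i) := by
  induction s using Finset.cons_induction with
  | empty => simp
  | cons a s ha ih => simp [Finset.sum_insert ha, Finset.sum_cons, ih, Multiset.filter_add]

lemma card_finsum (s : Finset ι) (F : ι → Multiset α) :
    Multiset.card (∑ i ∈ s, F i) = ∑ i ∈ s, Multiset.card (F i) := by
  induction s using Finset.cons_induction with
  | empty => simp
  | cons a s ha ih => simp [Finset.sum_insert ha, Finset.sum_cons, ih, Multiset.map_add, Multiset.card_add]

lemma bind_range_eq_sum (N : ℕ) (g : ℕ → Multiset α) :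
    (Multiset.range N).bind g = ∑ k ∈ Finset.range N, g k := by
  induction N with
  | zero => simp
  | succ N ih =>
    rw [Multiset.range_succ, Multiset.cons_bind, Finset.sum_range_succ, ih]
    exact add_comm _ _

end sums

lemma card_filter_lt_pred {n : ℕ} (hn : 1 ≤ n) :
    (Finset.univ.filter fun ℓ : Fin n => ℓ.1 < n - 1).card = n - 1 := by
  have he : (Finset.univ.filter fun ℓ : Fin n => ℓ.1 < n - 1)
      = Finset.Iio (⟨n-1, by omega⟩ : Fin n) := by
    ext ℓ
    simp [Fin.lt_def]
  rw [he]
  simp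

lemma card_filter_not_lt_pred {n : ℕ} (hn : 1 ≤ n) :
    (Finset.univ.filter fun ℓ : Fin n => ¬ ℓ.1 < n - 1).card = 1 := by
  have h := Finset.card_filter_add_card_filter_not
    (s := (Finset.univ : Finset (Fin n))) (p := fun ℓ : Fin n => ℓ.1 < n - 1)
  rw [card_filter_lt_pred hn] at h
  simp only [Finset.card_univ, Fintype.card_fin] at h
  omega

lemma tri_card (t : ℕ) :
    ((Finset.range (2*t+1) ×ˢ Finset.range (2*t+1)).filter fun p => p.1 ≤ p.2).card
      = (t+1)*(2*t+1) := by
  rw [Finset.card_eq_sum_card_fiberwise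
    (f := Prod.snd) (t := Finset.range (2*t+1))
    (fun p hp => by
      simp only [Finset.mem_coe, Finset.mem_filter, Finset.mem_product] at hp
      exact hp.1.2)]
  have hfib : ∀ b ∈ Finset.range (2*t+1),
      (((Finset.range (2*t+1) ×ˢ Finset.range (2*t+1)).filter fun p => p.1 ≤ p.2).filter
        fun p => p.2 = b).card = b + 1 := by
    intro b hb
    rw [Finset.mem_range] at hb
    have he : (((Finset.range (2*t+1) ×ˢ Finset.range (2*t+1)).filter fun p => p.1 ≤ p.2).filter
        fun p => p.2 = b) = (Finset.range (b+1)).image fun a => (a, b) := by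
      ext p
      simp only [Finset.mem_filter, Finset.mem_product, Finset.mem_range, Finset.mem_image]
      constructor
      · rintro ⟨⟨⟨h1, h2⟩, h3⟩, h4⟩
        exact ⟨p.1, by omega, by rw [← h4]⟩
      · rintro ⟨a, ha, rfl⟩
        refine ⟨⟨⟨by omega, by omega⟩, by omega⟩, rfl⟩
    rw [he, Finset.card_image_of_injective _ (fun a b hab => by
      simpa using congrArg Prod.fst hab), Finset.card_range]
  rw [Finset.sum_congr rfl hfib]
  have h1 := Finset.sum_range_succ' (fun i => i) (2*t+1)
  have h2 := Finset.sum_range_id_mul_two (2*t+1+1)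
  have hB : (∑ b ∈ Finset.range (2*t+1), (b+1)) = ∑ i ∈ Finset.range (2*t+1+1), i := by
    omega
  have hA : (∑ b ∈ Finset.range (2*t+1), (b+1)) * 2 = (2*t+1+1)*(2*t+1) := by
    rw [hB]
    simpa using h2
  have h4 : ((t+1)*(2*t+1)) * 2 = (2*t+1+1)*(2*t+1) := by ring
  exact Nat.eq_of_mul_eq_mul_right (by norm_num) (hA.trans h4.symm)

lemma Umult_eq_sum (n : ℕ) :
    Umult n = (∑ k ∈ Finset.range (n-1), ({(k:ℤ)+1, (k:ℤ)+1} : Multiset ℤ)) + {(n:ℤ)} := by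
  unfold Umult
  rw [bind_range_eq_sum]

lemma Umult_bounds {n : ℕ} (hn : 1 ≤ n) {x : ℤ} (hx : x ∈ Umult n) : 1 ≤ x ∧ x ≤ n := by
  rw [Umult_eq_sum] at hx
  rcases Multiset.mem_add.mp hx with h | h
  · rw [Multiset.mem_sum] at h
    obtain ⟨k, hk, hmem⟩ := h
    rw [Finset.mem_range] at hk
    have : x = (k:ℤ)+1 := by
      rcases Multiset.mem_cons.mp hmem with h | h
      · exact h
      · simpa using h
    subst this
    constructor <;> [omega; (push_cast; omega)]
  · have : x = (n:ℤ) := by simpa using h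
    subst this
    constructor <;> [(push_cast; omega); omega]

lemma count_pair {x a : ℤ} : Multiset.count x ({a, a} : Multiset ℤ) = if x = a then 2 else 0 := by
  by_cases h : x = a <;> simp [Multiset.count_cons, Multiset.count_singleton, h]

lemma Umult_count_lt {n : ℕ} {j : ℕ} (hj : j < n-1) :
    Multiset.count ((j:ℤ)+1) (Umult n) = 2 := by
  rw [Umult_eq_sum, Multiset.count_add, Multiset.count_sum']
  have h1 : ∀ k ∈ Finset.range (n-1),
      Multiset.count ((j:ℤ)+1) ({(k:ℤ)+1, (k:ℤ)+1} : Multiset ℤ)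
        = if k = j then 2 else 0 := by
    intro k hk
    rw [count_pair]
    congr 1
    have : ((j:ℤ)+1 = (k:ℤ)+1) ↔ (k = j) := by omega
    simp [this]
  rw [Finset.sum_congr rfl h1, Finset.sum_ite_eq' (Finset.range (n-1)) j (fun _ => 2),
    if_pos (Finset.mem_range.mpr hj)]
  have : ((j:ℤ)+1) ≠ (n:ℤ) := by omega
  simp [Multiset.count_singleton, this]

lemma Umult_count_n {n : ℕ} (hn : 1 ≤ n) :
    Multiset.count ((n:ℤ)) (Umult n) = 1 := by
  rw [Umult_eq_sum, Multiset.count_add, Multiset.count_sum']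
  have h1 : ∀ k ∈ Finset.range (n-1),
      Multiset.count ((n:ℤ)) ({(k:ℤ)+1, (k:ℤ)+1} : Multiset ℤ) = 0 := by
    intro k hk
    rw [Finset.mem_range] at hk
    rw [count_pair, if_neg (by omega)]
  rw [Finset.sum_congr rfl h1]
  simp

lemma mem_Vset {n : ℕ} {σ : Fin (2*n-1) → ℤ} :
    σ ∈ Vset n ↔
      (∀ i, σ i ∈ (Umult n).toFinset ∪ (Umult n).toFinset.image (fun x => -x)) ∧
      (Finset.univ.val.map fun i => |σ i|) = Umult n ∧
      (∀ i, |σ i| = (n:ℤ) → σ i < 0) := by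
  unfold Vset Uset sperm
  rw [Finset.mem_filter, Finset.mem_filter, Fintype.mem_piFinset]
  tauto

lemma card_codes {n t : ℕ} (ℓ : Fin n) (p : ℕ × ℕ) :
    Multiset.card (codes n t ℓ p) = if ℓ.1 < n - 1 then 2 else 1 := by
  unfold codes
  split_ifs <;> simp

lemma Km_card {n t : ℕ} (hn : 1 ≤ n) (p : Fin n → ℕ × ℕ) :
    Multiset.card (Km n t p) = 2*n - 1 := by
  unfold Km
  rw [card_finsum]
  rw [Finset.sum_congr rfl (fun ℓ _ => card_codes ℓ (p ℓ))]
  rw [Finset.sum_ite (fun _ => 2) (fun _ => 1), Finset.sum_const, Finset.sum_const,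
    card_filter_lt_pred hn, card_filter_not_lt_pred hn]
  simp only [smul_eq_mul]
  omega

lemma mem_Pfin {n t : ℕ} {p : Fin n → ℕ × ℕ} :
    p ∈ Pfin n t ↔ ∀ ℓ : Fin n,
      (ℓ.1 < n - 1 → (p ℓ).1 ≤ (p ℓ).2 ∧ (p ℓ).1 ≤ 2*t ∧ (p ℓ).2 ≤ 2*t) ∧
      (¬ ℓ.1 < n - 1 → (p ℓ).1 ≤ t ∧ (p ℓ).2 = 0) := by
  unfold Pfin
  rw [Fintype.mem_piFinset]
  apply forall_congr'
  intro ℓ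
  by_cases h : ℓ.1 < n - 1
  · rw [if_pos h]
    simp only [Finset.mem_filter, Finset.mem_product, Finset.mem_range]
    constructor
    · rintro ⟨⟨h1, h2⟩, h3⟩
      exact ⟨fun _ => ⟨h3, by omega, by omega⟩, fun hc => absurd h hc⟩
    · rintro ⟨h1, _⟩
      obtain ⟨a, b, c⟩ := h1 h
      exact ⟨⟨by omega, by omega⟩, a⟩
  · rw [if_neg h]
    simp only [Finset.mem_product, Finset.mem_range, Finset.mem_singleton]
    constructor
    · rintro ⟨h1, h2⟩
      exact ⟨fun hc => absurd hc h, fun _ => ⟨by omega, h2⟩⟩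
    · rintro ⟨_, h2⟩
      obtain ⟨a, b⟩ := h2 h
      exact ⟨by omega, b⟩

lemma Pfin_card {n t : ℕ} (hn : 1 ≤ n) :
    (Pfin n t).card = (t+1)^n * (2*t+1)^(n-1) := by
  unfold Pfin
  rw [Fintype.card_piFinset]
  have h1 : ∀ ℓ : Fin n,
      (if ℓ.1 < n - 1 then
        (Finset.range (2*t+1) ×ˢ Finset.range (2*t+1)).filter fun p => p.1 ≤ p.2
      else Finset.range (t+1) ×ˢ ({0} : Finset ℕ)).card
      = if ℓ.1 < n - 1 then (t+1)*(2*t+1) else (t+1) := by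
    intro ℓ
    split_ifs with h
    · exact tri_card t
    · rw [Finset.card_product, Finset.card_range, Finset.card_singleton, mul_one]
  rw [Finset.prod_congr rfl (fun ℓ _ => h1 ℓ)]
  rw [Finset.prod_ite (fun _ => (t+1)*(2*t+1)) (fun _ => (t+1)),
    Finset.prod_const, Finset.prod_const, card_filter_lt_pred hn, card_filter_not_lt_pred hn]
  rw [pow_one, mul_pow]
  have : (t+1)^(n-1) * (t+1) = (t+1)^n := by
    rw [← pow_succ]
    congr 1
    omega
  calc (t+1)^(n-1) * (2*t+1)^(n-1) * (t+1)
      = ((t+1)^(n-1) * (t+1)) * (2*t+1)^(n-1) := by ring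
    _ = (t+1)^n * (2*t+1)^(n-1) := by rw [this]

lemma univ_map_getD {α β : Type*} {m : ℕ} {l : List α} (hlen : l.length = m) (d : α)
    (f : α → β) :
    (Finset.univ.val.map fun i : Fin m => f (l.getD i.1 d)) = (↑l : Multiset α).map f := by
  subst hlen
  have hl : List.ofFn (fun i : Fin l.length => f (l.getD i.1 d)) = l.map f := by
    apply List.ext_getElem
    · simp
    · intro i h1 h2
      simp only [List.getElem_ofFn, List.getElem_map]
      rw [List.getD_eq_getElem l d (by simpa using h1)]
  rw [Fin.univ_val_map, hl]
  simp

lemma filter_map_getD {α : Type*} {m : ℕ} {l : List α} (hlen : l.length = m) (d : α)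
    (P : α → Prop) [DecidablePred P] :
    ((Finset.univ.filter fun i : Fin m => P (l.getD i.1 d)).val.map
        fun i : Fin m => l.getD i.1 d)
      = (↑l : Multiset α).filter P := by
  rw [Finset.filter_val]
  have h2 : (Multiset.filter (fun i : Fin m => P (l.getD i.1 d)) Finset.univ.val)
      = Multiset.filter (P ∘ fun i : Fin m => l.getD i.1 d) Finset.univ.val := rfl
  rw [h2, ← Multiset.filter_map P (fun i : Fin m => l.getD i.1 d) Finset.univ.val]
  congr 1
  have h3 := univ_map_getD hlen d (id : α → α)
  simpa using h3

lemma abs_decode_lt {n t : ℕ} (ℓ : Fin n) (hℓ : ℓ.1 < n - 1) (c : ℕ) (hc : c ≤ 2*t) :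
    |(itemOf n (keyOf n t ℓ c)).1| = (ℓ.1:ℤ)+1 := by
  rw [decode_lt ℓ hℓ c hc]
  simp only
  split_ifs with h
  · rw [abs_of_pos (by positivity)]
  · rw [abs_neg, abs_of_pos (by positivity)]
lemma item_decode_last {n t : ℕ} (hn : 1 ≤ n) (ℓ : Fin n) (hℓ : ¬ ℓ.1 < n - 1) (c : ℕ)
    (hc : c ≤ t) : (itemOf n (keyOf n t ℓ c)).1 = -(n:ℤ) := by
  rw [decode_last ℓ hℓ c hc]

lemma code_decode_lt {n t : ℕ} (ℓ : Fin n) (hℓ : ℓ.1 < n - 1) (c : ℕ) (hc : c ≤ 2*t) :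
    codeOf n t ℓ (itemOf n (keyOf n t ℓ c)) = c := by
  rw [decode_lt ℓ hℓ c hc]
  unfold codeOf
  rw [if_pos hℓ]
  simp only
  split_ifs with h <;> omega

lemma code_decode_last {n t : ℕ} (ℓ : Fin n) (hℓ : ¬ ℓ.1 < n - 1) (c : ℕ) (hc : c ≤ t) :
    codeOf n t ℓ (itemOf n (keyOf n t ℓ c)) = c := by
  rw [decode_last ℓ hℓ c hc]
  unfold codeOf
  rw [if_neg hℓ]
  simp only
  omega

/-- every key appearing in `Km` decodes to a valid item -/
lemma Km_key_prop {n t : ℕ} (hn : 1 ≤ n) {p : Fin n → ℕ × ℕ} (hp : p ∈ Pfin n t) {k : ℤ}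
    (hk : k ∈ Km n t p) :
    1 ≤ |(itemOf n k).1| ∧ |(itemOf n k).1| ≤ n ∧ (itemOf n k).2 ≤ t ∧
    ¬((itemOf n k).2 = 0 ∧ 0 < (itemOf n k).1) ∧
    (|(itemOf n k).1| = n → (itemOf n k).1 < 0) ∧
    k = (itemOf n k).1 - (2*(n:ℤ)+1) * (itemOf n k).2 := by
  unfold Km at hk
  rw [Multiset.mem_sum] at hk
  obtain ⟨ℓ, _, hmem⟩ := hk
  have hpℓ := mem_Pfin.mp hp ℓ
  unfold codes at hmem
  by_cases hℓ : ℓ.1 < n - 1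
  · rw [if_pos hℓ] at hmem
    obtain ⟨h1, h2, h3⟩ := hpℓ.1 hℓ
    have hc : ∃ c ≤ 2*t, k = keyOf n t ℓ c := by
      rcases Multiset.mem_cons.mp hmem with h | h
      · exact ⟨(p ℓ).1, by omega, h⟩
      · exact ⟨(p ℓ).2, by omega, by simpa using h⟩
    obtain ⟨c, hcle, rfl⟩ := hc
    have habs := abs_decode_lt ℓ hℓ c hcle
    have hdec := decode_lt ℓ hℓ c hcle
    have hv : (itemOf n (keyOf n t ℓ c)).1
        = (if c % 2 = 1 then ((ℓ.1:ℤ)+1) else -((ℓ.1:ℤ)+1)) := by rw [hdec]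
    have hg : (itemOf n (keyOf n t ℓ c)).2 = t - c/2 := by rw [hdec]
    refine ⟨by rw [habs]; omega, by rw [habs]; omega, by omega, ?_, by rw [habs]; omega, ?_⟩
    · rintro ⟨hg0, hv0⟩
      rw [hv] at hv0
      rw [hg] at hg0
      split_ifs at hv0 with hpar
      · omega
      · omega
    · rw [hv, hg]
      unfold keyOf
      rw [if_pos hℓ]
  · rw [if_neg hℓ] at hmem
    obtain ⟨h1, h2⟩ := hpℓ.2 hℓ
    have hkk : k = keyOf n t ℓ (p ℓ).1 := by simpa using hmem
    subst hkk
    have hdec := decode_last ℓ hℓ (p ℓ).1 h1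
    have hv : (itemOf n (keyOf n t ℓ (p ℓ).1)).1 = -(n:ℤ) := by rw [hdec]
    have hg : (itemOf n (keyOf n t ℓ (p ℓ).1)).2 = t - (p ℓ).1 := by rw [hdec]
    refine ⟨?_, ?_, by omega, ?_, ?_, ?_⟩
    · rw [hv, abs_neg, abs_of_nonneg (by positivity)]; omega
    · rw [hv, abs_neg, abs_of_nonneg (by positivity)]
    · rintro ⟨_, hv0⟩
      rw [hv] at hv0
      omega
    · intro _
      rw [hv]
      omega
    · rw [hv, hg]
      unfold keyOf
      rw [if_neg hℓ]

lemma sum_letters {n : ℕ} (hn : 1 ≤ n) :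
    (∑ ℓ : Fin n, (if ℓ.1 < n-1 then ({((ℓ.1:ℤ))+1, ((ℓ.1:ℤ))+1} : Multiset ℤ)
      else {(n:ℤ)})) = Umult n := by
  rw [Umult_eq_sum]
  have h0 := Fin.sum_univ_eq_sum_range
    (fun k => if k < n-1 then ({(k:ℤ)+1, (k:ℤ)+1} : Multiset ℤ) else {(n:ℤ)}) n
  rw [h0]
  have h1 : Finset.range n = insert (n-1) (Finset.range (n-1)) := by
    rw [← Finset.range_add_one]
    congr 1
    omega
  rw [h1, Finset.sum_insert (by simp), if_neg (by omega)]
  rw [Finset.sum_congr rfl (fun k hk => by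
    rw [if_pos (Finset.mem_range.mp hk)])]
  exact add_comm _ _

lemma pair_eq_pair {a b c d : ℕ} (h : a ::ₘ ({b} : Multiset ℕ) = c ::ₘ {d}) :
    (a = c ∧ b = d) ∨ (a = d ∧ b = c) := by
  rcases Multiset.cons_eq_cons.mp h with ⟨h1, h2⟩ | ⟨h1, cs, h2, h3⟩
  · exact Or.inl ⟨h1, Multiset.singleton_inj.mp h2⟩
  · have hcs : cs = 0 := by
      have h4 := congrArg Multiset.card h3
      simp at h4
      first
      | exact h4
      | exact h4.symm
      | exact Multiset.card_eq_zero.mp h4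
      | exact Multiset.card_eq_zero.mp h4.symm
    subst hcs
    have hb : b = c := by simpa using h2
    have hd : d = a := by simpa using h3
    exact Or.inr ⟨hd.symm, hb⟩

lemma pair_val {γ : Type*} [DecidableEq γ] {x y : γ} (hxy : x ≠ y) :
    ({x, y} : Finset γ).val = x ::ₘ ({y} : Multiset γ) := by
  rw [Finset.insert_val, Finset.singleton_val, Multiset.ndinsert_of_notMem (by simp [hxy])]

lemma inf_sup_pair {γ : Type*} [DecidableEq γ] {F : Finset γ} {f : γ → ℕ} {a b : ℕ}
    (hab : a ≤ b) (hmap : F.val.map f = a ::ₘ ({b} : Multiset ℕ)) (hne : F.Nonempty) :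
    F.inf' hne f = a ∧ F.sup' hne f = b := by
  have hcard : F.card = 2 := by
    have h5 := congrArg Multiset.card hmap
    rw [Multiset.card_map] at h5
    rw [Finset.card_def]
    simpa using h5
  obtain ⟨x, y, hxy, rfl⟩ := Finset.card_eq_two.mp hcard
  rw [pair_val hxy, Multiset.map_cons, Multiset.map_singleton] at hmap
  have hiv : ({x, y} : Finset γ).inf' hne f = f x ⊓ f y := by
    rw [Finset.inf'_insert (H := Finset.singleton_nonempty _), Finset.inf'_singleton]
  have hsv : ({x, y} : Finset γ).sup' hne f = f x ⊔ f y := by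
    rw [Finset.sup'_insert (H := Finset.singleton_nonempty _), Finset.sup'_singleton]
  rcases pair_eq_pair hmap with ⟨h1, h2⟩ | ⟨h1, h2⟩
  · rw [hiv, hsv, h1, h2]
    exact ⟨inf_eq_left.mpr hab, sup_eq_right.mpr hab⟩
  · rw [hiv, hsv, h1, h2]
    exact ⟨inf_eq_right.mpr hab, sup_eq_left.mpr hab⟩

lemma inf_singleton_val {γ : Type*} [DecidableEq γ] {F : Finset γ} {f : γ → ℕ} {a : ℕ}
    (hmap : F.val.map f = ({a} : Multiset ℕ)) (hne : F.Nonempty) :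
    F.inf' hne f = a := by
  have hcard : F.card = 1 := by
    have h5 := congrArg Multiset.card hmap
    rw [Multiset.card_map] at h5
    rw [Finset.card_def]
    simpa using h5
  obtain ⟨x, rfl⟩ := Finset.card_eq_one.mp hcard
  have : f x = a := by
    rw [Finset.singleton_val, Multiset.map_singleton] at hmap
    exact Multiset.singleton_inj.mp hmap
  rw [Finset.inf'_singleton, this]

def builtσ (n t : ℕ) (p : Fin n → ℕ × ℕ) : Fin (2*n-1) → ℤ :=
  fun i => (itemOf n ((Multiset.sort (Km n t p) (fun a b : ℤ => a ≤ b)).getD i.1 0)).1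

def builtg (n t : ℕ) (p : Fin n → ℕ × ℕ) : Fin (2*n-1) → ℕ :=
  fun i => (itemOf n ((Multiset.sort (Km n t p) (fun a b : ℤ => a ≤ b)).getD i.1 0)).2

def extract (n t : ℕ) (σ : Fin (2*n-1) → ℤ) (g : Fin (2*n-1) → ℕ) : Fin n → ℕ × ℕ :=
  fun ℓ =>
    if h : (Finset.univ.filter fun i : Fin (2*n-1) => |σ i| = (ℓ.1:ℤ)+1).Nonempty then
      if ℓ.1 < n - 1 then
        ((Finset.univ.filter fun i : Fin (2*n-1) => |σ i| = (ℓ.1:ℤ)+1).inf' h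
           (fun i => codeOf n t ℓ (σ i, g i)),
         (Finset.univ.filter fun i : Fin (2*n-1) => |σ i| = (ℓ.1:ℤ)+1).sup' h
           (fun i => codeOf n t ℓ (σ i, g i)))
      else
        ((Finset.univ.filter fun i : Fin (2*n-1) => |σ i| = (ℓ.1:ℤ)+1).inf' h
           (fun i => codeOf n t ℓ (σ i, g i)), 0)
    else (0, 0)

lemma no_pos_zero {n t : ℕ} {σ : Fin (2*n-1) → ℤ} {g : Fin (2*n-1) → ℕ}
    (hg : g ∈ GS σ t) : ∀ i, 0 < σ i → 1 ≤ g i := by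
  obtain ⟨hb, hadj, hlast⟩ := mem_GS.mp hg
  have H : ∀ j k (hk : k < 2*n-1), 2*n-1 - k ≤ j → 0 < σ ⟨k, hk⟩ → 1 ≤ g ⟨k, hk⟩ := by
    intro j
    induction j with
    | zero => intro k hk hj; omega
    | succ j ih =>
      intro k hk hj hpos
      by_cases h1 : k + 1 < 2*n-1
      · by_contra hg0
        push_neg at hg0
        have hga := (hadj k h1).1
        have hs := (hadj k h1).2
        have hσm : ¬ σ ⟨k+1, h1⟩ < σ ⟨k, Nat.lt_of_succ_lt h1⟩ := fun hc => by
          have := hs hc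
          omega
        push_neg at hσm
        have hrec := ih (k+1) h1 (by omega) (lt_of_lt_of_le hpos hσm)
        omega
      · have hk1 : k = 2*n-1-1 := by omega
        subst hk1
        exact hlast (by omega) hpos
  exact fun i hpos => H (2*n-1) i.1 i.isLt (by omega) hpos

lemma abs_bounds_of_content {n : ℕ} (hn : 1 ≤ n) {σ : Fin (2*n-1) → ℤ}
    (hcont : (Finset.univ.val.map fun i => |σ i|) = Umult n) (i : Fin (2*n-1)) :
    1 ≤ |σ i| ∧ |σ i| ≤ (n:ℤ) := by
  have hmem : |σ i| ∈ Umult n := by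
    rw [← hcont]
    exact Multiset.mem_map_of_mem _ (Finset.mem_univ i)
  exact Umult_bounds hn hmem

lemma F_card {n : ℕ} (hn : 1 ≤ n) {σ : Fin (2*n-1) → ℤ}
    (hcont : (Finset.univ.val.map fun i => |σ i|) = Umult n) (ℓ : Fin n) :
    (Finset.univ.filter fun i : Fin (2*n-1) => |σ i| = (ℓ.1:ℤ)+1).card
      = if ℓ.1 < n - 1 then 2 else 1 := by
  have h1 : Multiset.count ((ℓ.1:ℤ)+1) (Umult n) = if ℓ.1 < n-1 then 2 else 1 := by
    split_ifs with h
    · exact Umult_count_lt h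
    · have hl : ℓ.1 = n-1 := by have := ℓ.isLt; omega
      have heq : ((ℓ.1:ℤ)+1) = (n:ℤ) := by omega
      rw [heq]
      exact Umult_count_n hn
  rw [← hcont, Multiset.count_map] at h1
  rw [← h1, Finset.card_def, Finset.filter_val]
  congr 1
  apply Multiset.filter_congr
  intro i _
  constructor
  · exact fun h => h.symm
  · exact fun h => h.symm

lemma codeOf_le_lt {n t : ℕ} (ℓ : Fin n) (hℓ : ℓ.1 < n-1) {v : ℤ} {gv : ℕ}
    (hgv : gv ≤ t) (hnp : 0 < v → 1 ≤ gv) : codeOf n t ℓ (v, gv) ≤ 2*t := by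
  unfold codeOf
  rw [if_pos hℓ]
  simp only
  split_ifs with h
  · have := hnp h
    omega
  · omega

lemma extract_mem {n t : ℕ} (hn : 1 ≤ n) {σ : Fin (2*n-1) → ℤ} {g : Fin (2*n-1) → ℕ}
    (hσ : σ ∈ Vset n) (hg : g ∈ GS σ t) : extract n t σ g ∈ Pfin n t := by
  obtain ⟨hcomp, hcont, hsign⟩ := mem_Vset.mp hσ
  have hbnd := (mem_GS.mp hg).1
  have hnp := no_pos_zero hg
  rw [mem_Pfin]
  intro ℓ
  have hFc := F_card hn hcont ℓ
  have hne : (Finset.univ.filter fun i : Fin (2*n-1) => |σ i| = (ℓ.1:ℤ)+1).Nonempty := by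
    rw [← Finset.card_pos, hFc]
    split_ifs <;> omega
  unfold extract
  rw [dif_pos hne]
  have hne2 := hne
  obtain ⟨x, hx⟩ := hne2
  by_cases hℓ : ℓ.1 < n-1
  · rw [if_pos hℓ]
    have hsup : (Finset.univ.filter fun i : Fin (2*n-1) => |σ i| = (ℓ.1:ℤ)+1).sup' hne
        (fun i => codeOf n t ℓ (σ i, g i)) ≤ 2*t :=
      Finset.sup'_le _ _ (fun i _ => codeOf_le_lt ℓ hℓ (hbnd i) (hnp i))
    have hinfsup := le_trans (Finset.inf'_le (fun i => codeOf n t ℓ (σ i, g i)) hx)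
      (Finset.le_sup' (fun i => codeOf n t ℓ (σ i, g i)) hx)
    refine ⟨fun _ => ⟨hinfsup, le_trans hinfsup hsup, hsup⟩, fun hc => absurd hℓ hc⟩
  · rw [if_neg hℓ]
    have hinf : (Finset.univ.filter fun i : Fin (2*n-1) => |σ i| = (ℓ.1:ℤ)+1).inf' hne
        (fun i => codeOf n t ℓ (σ i, g i)) ≤ t := by
      refine le_trans (Finset.inf'_le (fun i => codeOf n t ℓ (σ i, g i)) hx) ?_
      unfold codeOf
      rw [if_neg hℓ]
      simp only
      omega
    exact ⟨fun hc => absurd hc hℓ, fun _ => ⟨hinf, rfl⟩⟩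

lemma codes_map_abs {n t : ℕ} (hn : 1 ≤ n) (ℓ : Fin n) (pp : ℕ × ℕ)
    (h1 : ℓ.1 < n-1 → pp.1 ≤ pp.2 ∧ pp.1 ≤ 2*t ∧ pp.2 ≤ 2*t)
    (h2 : ¬ ℓ.1 < n-1 → pp.1 ≤ t ∧ pp.2 = 0) :
    (codes n t ℓ pp).map (fun k => |(itemOf n k).1|)
      = if ℓ.1 < n-1 then ({((ℓ.1:ℤ))+1, ((ℓ.1:ℤ))+1} : Multiset ℤ) else {(n:ℤ)} := by
  unfold codes
  split_ifs with h
  · obtain ⟨ha, hb, hc⟩ := h1 h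
    rw [show ({keyOf n t ℓ pp.1, keyOf n t ℓ pp.2} : Multiset ℤ)
        = keyOf n t ℓ pp.1 ::ₘ {keyOf n t ℓ pp.2} from rfl]
    rw [Multiset.map_cons, Multiset.map_singleton, abs_decode_lt ℓ h pp.1 hb,
      abs_decode_lt ℓ h pp.2 hc]
    rfl
  · obtain ⟨ha, _⟩ := h2 h
    rw [Multiset.map_singleton, item_decode_last hn ℓ h pp.1 ha, abs_neg,
      abs_of_nonneg (by positivity)]

lemma getD_sorted_le {l : List ℤ} (hs : List.Pairwise (fun a b : ℤ => a ≤ b) l)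
    {a b : ℕ} (hb : b < l.length) (hab : a ≤ b) : l.getD a 0 ≤ l.getD b 0 := by
  rcases Nat.eq_or_lt_of_le hab with rfl | h
  · exact le_refl _
  · rw [List.getD_eq_getElem _ 0 (by omega), List.getD_eq_getElem _ 0 hb]
    have hp := List.pairwise_iff_get.mp hs
    have := hp ⟨a, by omega⟩ ⟨b, hb⟩ (by simpa [Fin.lt_def] using h)
    simpa using this

lemma built_mem {n t : ℕ} (hn : 1 ≤ n) {p : Fin n → ℕ × ℕ} (hp : p ∈ Pfin n t) :
    builtσ n t p ∈ Vset n ∧ builtg n t p ∈ GS (builtσ n t p) t := by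
  have hlen : (Multiset.sort (Km n t p) (fun a b : ℤ => a ≤ b)).length = 2*n-1 := by
    rw [Multiset.length_sort, Km_card hn]
  have hkeymem : ∀ (j : ℕ), j < 2*n-1 →
      (Multiset.sort (Km n t p) (fun a b : ℤ => a ≤ b)).getD j 0 ∈ Km n t p := by
    intro j hj
    have h2 : (Multiset.sort (Km n t p) (fun a b : ℤ => a ≤ b)).getD j 0
        ∈ (Multiset.sort (Km n t p) (fun a b : ℤ => a ≤ b)) := by
      rw [List.getD_eq_getElem _ 0 (by omega)]
      exact List.getElem_mem _
    exact (Multiset.mem_sort (fun a b : ℤ => a ≤ b)).mp h2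
  have hprop := fun (j : ℕ) (hj : j < 2*n-1) => Km_key_prop hn hp (hkeymem j hj)
  have hcont : (Finset.univ.val.map fun i : Fin (2*n-1) => |builtσ n t p i|) = Umult n := by
    unfold builtσ
    rw [univ_map_getD hlen 0 (fun k => |(itemOf n k).1|)]
    rw [Multiset.sort_eq]
    unfold Km
    rw [map_finsum_ms]
    rw [Finset.sum_congr rfl (fun ℓ _ => codes_map_abs hn ℓ (p ℓ)
      ((mem_Pfin.mp hp ℓ).1) ((mem_Pfin.mp hp ℓ).2))]
    exact sum_letters hn
  constructor
  · rw [mem_Vset]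
    refine ⟨?_, hcont, ?_⟩
    · intro i
      have habs : |builtσ n t p i| ∈ Umult n := by
        rw [← hcont]
        exact Multiset.mem_map_of_mem _ (Finset.mem_univ i)
      rcases le_or_gt 0 (builtσ n t p i) with h | h
      · apply Finset.mem_union_left
        rw [Multiset.mem_toFinset]
        rwa [abs_of_nonneg h] at habs
      · apply Finset.mem_union_right
        rw [Finset.mem_image]
        exact ⟨|builtσ n t p i|, Multiset.mem_toFinset.mpr habs, by rw [abs_of_neg h]; ring⟩
    · intro i hi
      exact (hprop i.1 i.isLt).2.2.2.2.1 hi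
  · rw [mem_GS]
    refine ⟨?_, ?_, ?_⟩
    · intro i
      exact (hprop i.1 i.isLt).2.2.1
    · intro i hi
      have hk := getD_sorted_le (Multiset.pairwise_sort (Km n t p) (fun a b : ℤ => a ≤ b))
        (a := i) (b := i+1) (by rw [hlen]; exact hi) (by omega)
      have p1 := hprop i (Nat.lt_of_succ_lt hi)
      have p2 := hprop (i+1) hi
      rw [p1.2.2.2.2.2, p2.2.2.2.2.2] at hk
      exact of_key_le n p1.2.1 p2.2.1 hk
    · intro hm hpos
      have p := hprop (2*n-1-1) (by omega)
      have h4 := p.2.2.2.1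
      unfold builtσ at hpos
      unfold builtg
      by_contra hc
      push_neg at hc
      exact h4 ⟨Nat.lt_one_iff.mp hc, hpos⟩

lemma codes_filter_letter {n t : ℕ} (hn : 1 ≤ n) (ℓ ℓ' : Fin n) (pp : ℕ × ℕ)
    (h1 : ℓ'.1 < n-1 → pp.1 ≤ pp.2 ∧ pp.1 ≤ 2*t ∧ pp.2 ≤ 2*t)
    (h2 : ¬ ℓ'.1 < n-1 → pp.1 ≤ t ∧ pp.2 = 0) :
    Multiset.filter (fun k => |(itemOf n k).1| = ((ℓ.1:ℤ)+1)) (codes n t ℓ' pp)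
      = if ℓ' = ℓ then codes n t ℓ' pp else 0 := by
  have habs : ∀ k ∈ codes n t ℓ' pp,
      |(itemOf n k).1| = if ℓ'.1 < n-1 then ((ℓ'.1:ℤ)+1) else (n:ℤ) := by
    intro k hk
    unfold codes at hk
    split_ifs at hk with h
    · rw [if_pos h]
      rcases Multiset.mem_cons.mp hk with h3 | h3
      · rw [h3]
        exact abs_decode_lt ℓ' h pp.1 (h1 h).2.1
      · rw [Multiset.mem_singleton.mp h3]
        exact abs_decode_lt ℓ' h pp.2 (h1 h).2.2
    · rw [if_neg h, Multiset.mem_singleton.mp hk,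
        item_decode_last hn ℓ' h pp.1 (h2 h).1, abs_neg, abs_of_nonneg (by positivity)]
  by_cases hEq : ℓ' = ℓ
  · subst hEq
    rw [if_pos rfl]
    apply Multiset.filter_eq_self.mpr
    intro k hk
    have h5 := habs k hk
    split_ifs at h5 with h
    · rw [h5]
    · rw [h5]
      have hl : ℓ'.1 = n-1 := by have := ℓ'.isLt; omega
      omega
  · rw [if_neg hEq]
    rw [Multiset.filter_eq_nil]
    intro k hk hcontra
    have h5 := habs k hk
    split_ifs at h5 with h
    · rw [h5] at hcontra
      exact hEq (Fin.ext (by omega))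
    · rw [h5] at hcontra
      have hl' : ℓ'.1 = n-1 := by have := ℓ'.isLt; omega
      have hl : ℓ.1 = n-1 := by have := ℓ.isLt; omega
      exact hEq (Fin.ext (by omega))

lemma extract_built {n t : ℕ} (hn : 1 ≤ n) {p : Fin n → ℕ × ℕ} (hp : p ∈ Pfin n t) :
    extract n t (builtσ n t p) (builtg n t p) = p := by
  have hlen : (Multiset.sort (Km n t p) (fun a b : ℤ => a ≤ b)).length = 2*n-1 := by
    rw [Multiset.length_sort, Km_card hn]
  funext ℓ
  have hFmap : ((Finset.univ.filter
        fun i : Fin (2*n-1) => |builtσ n t p i| = ((ℓ.1:ℤ)+1)).val.map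
      (fun i : Fin (2*n-1) => (Multiset.sort (Km n t p) (fun a b : ℤ => a ≤ b)).getD i.1 0))
      = codes n t ℓ (p ℓ) := by
    have h0 : (Finset.univ.filter fun i : Fin (2*n-1) => |builtσ n t p i| = ((ℓ.1:ℤ)+1))
        = (Finset.univ.filter fun i : Fin (2*n-1) =>
            (fun k => |(itemOf n k).1| = ((ℓ.1:ℤ)+1))
              ((Multiset.sort (Km n t p) (fun a b : ℤ => a ≤ b)).getD i.1 0)) := rfl
    rw [h0, filter_map_getD hlen 0 (fun k => |(itemOf n k).1| = ((ℓ.1:ℤ)+1))]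
    rw [Multiset.sort_eq]
    unfold Km
    rw [filter_finsum]
    rw [Finset.sum_congr rfl (fun ℓ' _ => codes_filter_letter hn ℓ ℓ' (p ℓ')
        ((mem_Pfin.mp hp ℓ').1) ((mem_Pfin.mp hp ℓ').2))]
    rw [Finset.sum_ite_eq' Finset.univ ℓ (fun ℓ' => codes n t ℓ' (p ℓ'))]
    simp
  have hcodemap : ((Finset.univ.filter
        fun i : Fin (2*n-1) => |builtσ n t p i| = ((ℓ.1:ℤ)+1)).val.map
      (fun i => codeOf n t ℓ (builtσ n t p i, builtg n t p i)))
      = (codes n t ℓ (p ℓ)).map (fun k => codeOf n t ℓ (itemOf n k)) := by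
    rw [← hFmap, Multiset.map_map]
    rfl
  have hcard2 : (Finset.univ.filter
        fun i : Fin (2*n-1) => |builtσ n t p i| = ((ℓ.1:ℤ)+1)).card
      = Multiset.card (codes n t ℓ (p ℓ)) := by
    have h5 := congrArg Multiset.card hFmap
    rw [Multiset.card_map] at h5
    rw [Finset.card_def]
    exact h5
  have hne : (Finset.univ.filter
      fun i : Fin (2*n-1) => |builtσ n t p i| = ((ℓ.1:ℤ)+1)).Nonempty := by
    rw [← Finset.card_pos, hcard2, card_codes]
    split_ifs <;> omega
  unfold extract
  rw [dif_pos hne]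
  by_cases hℓ : ℓ.1 < n-1
  · rw [if_pos hℓ]
    obtain ⟨ha, hb, hc⟩ := (mem_Pfin.mp hp ℓ).1 hℓ
    have hcm : ((Finset.univ.filter
          fun i : Fin (2*n-1) => |builtσ n t p i| = ((ℓ.1:ℤ)+1)).val.map
        (fun i => codeOf n t ℓ (builtσ n t p i, builtg n t p i)))
        = (p ℓ).1 ::ₘ {(p ℓ).2} := by
      rw [hcodemap]
      unfold codes
      rw [if_pos hℓ]
      rw [show ({keyOf n t ℓ (p ℓ).1, keyOf n t ℓ (p ℓ).2} : Multiset ℤ)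
          = keyOf n t ℓ (p ℓ).1 ::ₘ {keyOf n t ℓ (p ℓ).2} from rfl]
      rw [Multiset.map_cons, Multiset.map_singleton,
        code_decode_lt ℓ hℓ _ hb, code_decode_lt ℓ hℓ _ hc]
    have his := inf_sup_pair ha hcm hne
    rw [his.1, his.2]
  · rw [if_neg hℓ]
    obtain ⟨ha, hb⟩ := (mem_Pfin.mp hp ℓ).2 hℓ
    have hcm : ((Finset.univ.filter
          fun i : Fin (2*n-1) => |builtσ n t p i| = ((ℓ.1:ℤ)+1)).val.map
        (fun i => codeOf n t ℓ (builtσ n t p i, builtg n t p i)))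
        = ({(p ℓ).1} : Multiset ℕ) := by
      rw [hcodemap]
      unfold codes
      rw [if_neg hℓ]
      rw [Multiset.map_singleton, code_decode_last ℓ hℓ _ ha]
    rw [inf_singleton_val hcm hne]
    rw [show p ℓ = ((p ℓ).1, (p ℓ).2) from rfl, hb]

lemma inf'_of_pair {γ : Type*} [DecidableEq γ] {x y : γ} (f : γ → ℕ)
    (G : Finset γ) (hG : G.Nonempty) (h : G = {x, y}) : G.inf' hG f = f x ⊓ f y := by
  subst h
  rw [Finset.inf'_insert (H := Finset.singleton_nonempty _), Finset.inf'_singleton]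

lemma sup'_of_pair {γ : Type*} [DecidableEq γ] {x y : γ} (f : γ → ℕ)
    (G : Finset γ) (hG : G.Nonempty) (h : G = {x, y}) : G.sup' hG f = f x ⊔ f y := by
  subst h
  rw [Finset.sup'_insert (H := Finset.singleton_nonempty _), Finset.sup'_singleton]

lemma inf'_of_singleton {γ : Type*} [DecidableEq γ] {x : γ} (f : γ → ℕ)
    (G : Finset γ) (hG : G.Nonempty) (h : G = {x}) : G.inf' hG f = f x := by
  subst h
  rw [Finset.inf'_singleton]

lemma pair_swap {a b : ℤ} : a ::ₘ ({b} : Multiset ℤ) = b ::ₘ {a} := by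
  rw [show ({b} : Multiset ℤ) = b ::ₘ 0 from rfl, show ({a} : Multiset ℤ) = a ::ₘ 0 from rfl,
    Multiset.cons_swap]

lemma built_extract {n t : ℕ} (hn : 1 ≤ n) {σ : Fin (2*n-1) → ℤ} {g : Fin (2*n-1) → ℕ}
    (hσ : σ ∈ Vset n) (hg : g ∈ GS σ t) :
    builtσ n t (extract n t σ g) = σ ∧ builtg n t (extract n t σ g) = g := by
  obtain ⟨hcomp, hcont, hsign⟩ := mem_Vset.mp hσ
  have habs := fun i => abs_bounds_of_content hn hcont i
  have hgmem := mem_GS.mp hg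
  have hnp := no_pos_zero hg
  set key := fun i : Fin (2*n-1) => σ i - (2*(n:ℤ)+1) * (g i) with hkey
  have hadjkey : ∀ (i : ℕ) (hi : i+1 < 2*n-1),
      key ⟨i, Nat.lt_of_succ_lt hi⟩ ≤ key ⟨i+1, hi⟩ := by
    intro i hi
    exact key_le_of n (habs _).2 (habs _).2 (hgmem.2.1 i hi).1 (hgmem.2.1 i hi).2
  have hkmono : Monotone key := by
    intro i j hij
    exact chain_mono hadjkey i.1 j.1 i.isLt j.isLt hij
  have hKm : Km n t (extract n t σ g) = Finset.univ.val.map key := by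
    unfold Km
    have hval : (Finset.univ.val : Multiset (Fin (2*n-1)))
        = ∑ ℓ : Fin n, (Finset.univ.filter
            fun i : Fin (2*n-1) => |σ i| = ((ℓ.1:ℤ)+1)).val := by
      refine Multiset.ext.mpr fun a => ?_
      rw [Multiset.count_sum']
      have hb := habs a
      have hℓa : (|σ a|).toNat - 1 < n := by omega
      have hstep : ∀ ℓ : Fin n, Multiset.count a (Finset.univ.filter
          (fun i : Fin (2*n-1) => |σ i| = ((ℓ.1:ℤ)+1))).val
          = if ℓ = ⟨(|σ a|).toNat - 1, hℓa⟩ then 1 else 0 := by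
        intro ℓ
        rw [Finset.filter_val, Multiset.count_filter]
        by_cases h : |σ a| = ((ℓ.1:ℤ)+1)
        · rw [if_pos h, Multiset.count_univ, if_pos (Fin.ext (by simp only; omega))]
        · rw [if_neg h, if_neg (fun hc => h (by
            have h7 := congrArg Fin.val hc
            simp only at h7
            omega))]
      rw [Finset.sum_congr rfl (fun ℓ _ => hstep ℓ)]
      rw [Finset.sum_ite_eq' Finset.univ (⟨(|σ a|).toNat - 1, hℓa⟩ : Fin n)
        (fun _ => (1 : ℕ))]
      simp [Multiset.count_univ]
    have hpart : Finset.univ.val.map key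
        = ∑ ℓ : Fin n, ((Finset.univ.filter
            fun i : Fin (2*n-1) => |σ i| = ((ℓ.1:ℤ)+1)).val.map key) := by
      calc Finset.univ.val.map key
          = (∑ ℓ : Fin n, (Finset.univ.filter
              fun i : Fin (2*n-1) => |σ i| = ((ℓ.1:ℤ)+1)).val).map key := by rw [← hval]
        _ = _ := map_finsum_ms _ _ _
    rw [hpart]
    apply Finset.sum_congr rfl
    intro ℓ _
    have hFc := F_card hn hcont ℓ
    have hne : (Finset.univ.filter
        fun i : Fin (2*n-1) => |σ i| = ((ℓ.1:ℤ)+1)).Nonempty := by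
      rw [← Finset.card_pos, hFc]
      split_ifs <;> omega
    by_cases hℓ : ℓ.1 < n-1
    · rw [if_pos hℓ] at hFc
      obtain ⟨x, y, hxy, hFxy⟩ := Finset.card_eq_two.mp hFc
      have hxmem : x ∈ (Finset.univ.filter
          fun i : Fin (2*n-1) => |σ i| = ((ℓ.1:ℤ)+1)) := by rw [hFxy]; simp
      have hymem : y ∈ (Finset.univ.filter
          fun i : Fin (2*n-1) => |σ i| = ((ℓ.1:ℤ)+1)) := by rw [hFxy]; simp
      have hxl : |σ x| = ((ℓ.1:ℤ)+1) := (Finset.mem_filter.mp hxmem).2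
      have hyl : |σ y| = ((ℓ.1:ℤ)+1) := (Finset.mem_filter.mp hymem).2
      have hinf := inf'_of_pair (fun i => codeOf n t ℓ (σ i, g i)) _ hne hFxy
      have hsup := sup'_of_pair (fun i => codeOf n t ℓ (σ i, g i)) _ hne hFxy
      have hex : extract n t σ g ℓ
          = (codeOf n t ℓ (σ x, g x) ⊓ codeOf n t ℓ (σ y, g y),
             codeOf n t ℓ (σ x, g x) ⊔ codeOf n t ℓ (σ y, g y)) := by
        unfold extract
        rw [dif_pos hne, if_pos hℓ, hinf, hsup]
      rw [hex]
      unfold codes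
      rw [if_pos hℓ]
      have hencx := encode_lt ℓ hℓ (σ x) (g x) hxl (hgmem.1 x) (hnp x)
      have hency := encode_lt ℓ hℓ (σ y) (g y) hyl (hgmem.1 y) (hnp y)
      rw [hFxy, pair_val hxy, Multiset.map_cons, Multiset.map_singleton]
      rcases le_total (codeOf n t ℓ (σ x, g x)) (codeOf n t ℓ (σ y, g y)) with hle | hle
      · rw [inf_eq_left.mpr hle, sup_eq_right.mpr hle]
        rw [show ({keyOf n t ℓ (codeOf n t ℓ (σ x, g x)),
            keyOf n t ℓ (codeOf n t ℓ (σ y, g y))} : Multiset ℤ)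
            = keyOf n t ℓ (codeOf n t ℓ (σ x, g x)) ::ₘ
              {keyOf n t ℓ (codeOf n t ℓ (σ y, g y))} from rfl]
        rw [hencx, hency]
      · rw [inf_eq_right.mpr hle, sup_eq_left.mpr hle]
        rw [show ({keyOf n t ℓ (codeOf n t ℓ (σ y, g y)),
            keyOf n t ℓ (codeOf n t ℓ (σ x, g x))} : Multiset ℤ)
            = keyOf n t ℓ (codeOf n t ℓ (σ y, g y)) ::ₘ
              {keyOf n t ℓ (codeOf n t ℓ (σ x, g x))} from rfl]
        rw [hencx, hency, pair_swap]
    · obtain ⟨x, hFx⟩ := Finset.card_eq_one.mp (by rw [hFc, if_neg hℓ])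
      have hxmem : x ∈ (Finset.univ.filter
          fun i : Fin (2*n-1) => |σ i| = ((ℓ.1:ℤ)+1)) := by rw [hFx]; simp
      have hxl : |σ x| = ((ℓ.1:ℤ)+1) := (Finset.mem_filter.mp hxmem).2
      have hlast : ℓ.1 = n - 1 := by have := ℓ.isLt; omega
      have hxn : |σ x| = (n:ℤ) := by rw [hxl]; omega
      have hneg : σ x < 0 := hsign x hxn
      have hσx : σ x = -(n:ℤ) := by
        rw [abs_of_neg hneg] at hxn
        omega
      have hinf := inf'_of_singleton (fun i => codeOf n t ℓ (σ i, g i)) _ hne hFx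
      have hex : extract n t σ g ℓ = (codeOf n t ℓ (σ x, g x), 0) := by
        unfold extract
        rw [dif_pos hne, if_neg hℓ, hinf]
      rw [hex]
      unfold codes
      rw [if_neg hℓ]
      have hencx := encode_last ℓ hℓ (σ x) (g x) hσx (hgmem.1 x)
      rw [hFx, Finset.singleton_val, Multiset.map_singleton]
      simp only
      rw [hencx]
  have hsorteq : Multiset.sort (Km n t (extract n t σ g)) (fun a b : ℤ => a ≤ b)
      = List.ofFn key := by
    apply fun hp h1 h2 => List.Perm.eq_of_pairwise' (r := fun a b : ℤ => a ≤ b) h1 h2 hp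
    · apply Multiset.coe_eq_coe.mp
      rw [Multiset.sort_eq, hKm, Fin.univ_val_map]
    · exact Multiset.pairwise_sort _ _
    · exact (List.sortedLE_ofFn_iff.mpr hkmono).pairwise
  have hitem : ∀ i : Fin (2*n-1), itemOf n (key i) = (σ i, g i) := by
    intro i
    have hb := habs i
    have h1 : -(n:ℤ) ≤ σ i := by
      have := abs_le.mp hb.2
      exact this.1
    have h2 : σ i ≤ (n:ℤ) := (abs_le.mp hb.2).2
    exact itemOf_spec n (σ i) (g i) h1 h2
  constructor
  · funext i
    unfold builtσ
    rw [hsorteq, List.getD_eq_getElem _ 0 (by rw [List.length_ofFn]; exact i.isLt),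
      List.getElem_ofFn]
    exact congrArg Prod.fst (hitem ⟨i.1, i.isLt⟩)
  · funext i
    unfold builtg
    rw [hsorteq, List.getD_eq_getElem _ 0 (by rw [List.length_ofFn]; exact i.isLt),
      List.getElem_ofFn]
    exact congrArg Prod.snd (hitem ⟨i.1, i.isLt⟩)

theorem main_count (n t : ℕ) (hn : 1 ≤ n) :
    ∑ σ ∈ Vset n, (GS σ t).card = (t+1)^n * (2*t+1)^(n-1) := by
  rw [← Finset.card_sigma, ← Pfin_card (n := n) (t := t) hn]
  apply Finset.card_nbij' (i := fun a => extract n t a.1 a.2)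
    (j := fun p => ⟨builtσ n t p, builtg n t p⟩)
  · intro a ha
    rw [Finset.mem_coe, Finset.mem_sigma] at ha
    exact extract_mem hn ha.1 ha.2
  · intro p hp
    rw [Finset.mem_coe, Finset.mem_sigma]
    exact ⟨(built_mem hn hp).1, (built_mem hn hp).2⟩
  · intro a ha
    rw [Finset.mem_coe, Finset.mem_sigma] at ha
    obtain ⟨σ0, g0⟩ := a
    obtain ⟨h1, h2⟩ := built_extract hn ha.1 ha.2
    exact Sigma.ext h1 (heq_of_eq h2)
  · intro p hp
    exact extract_built hn hp

open PowerSeries in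
theorem auxStmt12 (n : ℕ) (hn : 1 ≤ n) :
    (∑ σ ∈ Vset n, (PowerSeries.X : PowerSeries ℤ) ^ desB σ)
      = (PowerSeries.mk fun t => ((t + 1) ^ n * (2 * t + 1) ^ (n - 1) : ℤ))
          * (1 - PowerSeries.X) ^ (2 * n) := by
  have hunit := PowerSeries.invOneSubPow_inv_eq_one_sub_pow (S := ℤ) (d := 2*n)
  rw [← hunit, Units.inv_eq_val_inv, Units.eq_mul_inv_iff_mul_eq]
  rw [PowerSeries.invOneSubPow_val_eq_mk_sub_one_add_choose_of_pos (S := ℤ) (d := 2*n) (by omega)]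
  ext k
  rw [PowerSeries.coeff_mk, Finset.sum_mul, map_sum]
  have hterm : ∀ σ ∈ Vset n,
      (PowerSeries.coeff k) ((PowerSeries.X : PowerSeries ℤ) ^ desB σ
          * PowerSeries.mk fun m => ((2*n - 1 + m).choose (2*n - 1) : ℤ))
        = if desB σ ≤ k then (((2*n - 1) + (k - desB σ)).choose (2*n - 1) : ℤ) else 0 := by
    intro σ _
    rw [mul_comm, PowerSeries.coeff_mul_X_pow']
    split_ifs with h
    · rw [PowerSeries.coeff_mk]
    · rfl
  rw [Finset.sum_congr rfl hterm]
  have hℕ : ∑ σ ∈ Vset n,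
      (if desB σ ≤ k then ((2*n - 1) + (k - desB σ)).choose (2*n - 1) else 0)
      = (k+1)^n * (2*k+1)^(n-1) := by
    have hper : ∀ σ : Fin (2*n-1) → ℤ,
        (if desB σ ≤ k then ((2*n - 1) + (k - desB σ)).choose (2*n - 1) else 0)
          = (GS σ k).card := by
      intro σ
      rw [GS_card (show 0 < 2*n-1 by omega) σ k]
      by_cases h : desB σ ≤ k
      · rw [if_pos h, if_pos h, Nat.add_comm]
      · rw [if_neg h, if_neg h]
    rw [Finset.sum_congr rfl (fun σ _ => hper σ)]
    exact main_count n k hn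
  calc (∑ σ ∈ Vset n,
      if desB σ ≤ k then (((2*n - 1) + (k - desB σ)).choose (2*n - 1) : ℤ) else 0)
      = ((∑ σ ∈ Vset n,
        (if desB σ ≤ k then ((2*n - 1) + (k - desB σ)).choose (2*n - 1) else 0) : ℕ) : ℤ) := by
        push_cast
        rfl
    _ = (((k+1)^n * (2*k+1)^(n-1) : ℕ) : ℤ) := by rw [hℕ]
    _ = ((k:ℤ) + 1) ^ n * (2 * (k:ℤ) + 1) ^ (n - 1) := by push_cast; ring


theorem stmt12 (n : ℕ) (hn : 1 ≤ n) :
    (∑ σ ∈ Vset n, (PowerSeries.X : PowerSeries ℤ) ^ desB σ)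
      = (PowerSeries.mk fun t => ((t + 1) ^ n * (2 * t + 1) ^ (n - 1) : ℤ))
          * (1 - PowerSeries.X) ^ (2 * n) := by
  exact auxStmt12 n hn

end
end

section
/- For s = (1,4,3,8,5,12,…), i.e., s_{2i−1} = 2i−1 and s_{2i} = 4i, the number of n-tuples (λ₁,…,λₙ) of nonnegative integers with λᵢ/sᵢ ≤ λᵢ₊₁/sᵢ₊₁ for 1 ≤ i ≤ n−1 and λₙ ≤ t·sₙ equals (t+1)^{⌈n/2⌉}(2t+1)^{⌊n/2⌋} for every nonnegative integer t. -/
open Finset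

open Polynomial PowerSeries

section LHall17
set_option maxHeartbeats 1000000

-- monomial closed forms
def Om (k m : ℕ) : ℕ :=
  if m % (2*k+1) ≤ k then
    (m/(2*k+1)+1)^(k+1) * ((2*(m/(2*k+1))+3)^(m % (2*k+1)) * (2*(m/(2*k+1))+1)^(k - m % (2*k+1)))
  else
    (m/(2*k+1)+2)^(m % (2*k+1) - k) * (m/(2*k+1)+1)^(2*k+1 - m % (2*k+1)) * (2*(m/(2*k+1))+3)^k

def Em (k m : ℕ) : ℕ :=
  if k = 0 then 1 else
  if m % (4*k) % 2 = 0 then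
    (if m % (4*k) / 2 ≤ k then
      (m/(4*k)+1)^k * ((2*(m/(4*k))+3)^(m % (4*k) / 2) * (2*(m/(4*k))+1)^(k - m % (4*k) / 2))
     else
      (m/(4*k)+2)^(m % (4*k) / 2 - k) * (m/(4*k)+1)^(2*k - m % (4*k) / 2) * (2*(m/(4*k))+3)^k)
  else
    (if m % (4*k) / 2 < k then
      (m/(4*k)+1)^k * ((2*(m/(4*k))+2) * ((2*(m/(4*k))+3)^(m % (4*k) / 2) * (2*(m/(4*k))+1)^(k - 1 - m % (4*k) / 2)))
     else
      (m/(4*k)+1)^(2*k - m % (4*k) / 2) * (m/(4*k)+2)^(m % (4*k) / 2 - k) * ((2*(m/(4*k))+3)^(k-1) * (2*(m/(4*k))+4)))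

def Fcl (n m : ℕ) : ℕ := if n % 2 = 0 then Em (n/2) m else Om (n/2) m

def Rrec : ℕ → ℕ → ℕ
  | 0, _ => 1
  | (n+1), m => ∑ j ∈ Finset.range (m+1), Rrec n (j * sA n / sA (n+1))

-- eval lemmas
lemma Om_eval_lo (k t r : ℕ) (h : r ≤ k) :
    Om k ((2*k+1)*t + r) = (t+1)^(k+1) * ((2*t+3)^r * (2*t+1)^(k-r)) := by
  have h1 : ((2*k+1)*t + r) / (2*k+1) = t := by
    rw [Nat.mul_add_div (by omega), Nat.div_eq_of_lt (by omega)]; omega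
  have h2 : ((2*k+1)*t + r) % (2*k+1) = r := by
    rw [Nat.mul_add_mod, Nat.mod_eq_of_lt (by omega)]
  unfold Om; rw [h1, h2, if_pos h]

lemma Om_eval_hi (k t r : ℕ) (h1 : k ≤ r) (h2 : r ≤ 2*k) :
    Om k ((2*k+1)*t + r) = (t+2)^(r-k) * (t+1)^(k+1-(r-k)) * (2*t+3)^k := by
  have hq : ((2*k+1)*t + r) / (2*k+1) = t := by
    rw [Nat.mul_add_div (by omega), Nat.div_eq_of_lt (by omega)]; omega
  have hm : ((2*k+1)*t + r) % (2*k+1) = r := by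
    rw [Nat.mul_add_mod, Nat.mod_eq_of_lt (by omega)]
  unfold Om; rw [hq, hm]
  rcases Nat.eq_or_lt_of_le h1 with he | hlt
  · subst he
    rw [if_pos (le_refl k)]
    simp [Nat.sub_self]
  · rw [if_neg (by omega)]
    rw [show k+1-(r-k) = 2*k+1-r by omega]

lemma Em_eval_even_lo (k t b : ℕ) (hk : 1 ≤ k) (hb : b ≤ k) :
    Em k (4*k*t + 2*b) = (t+1)^k * ((2*t+3)^b * (2*t+1)^(k-b)) := by
  have hq : (4*k*t + 2*b) / (4*k) = t := by
    rw [Nat.mul_add_div (by omega), Nat.div_eq_of_lt (by omega)]; omega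
  have hm : (4*k*t + 2*b) % (4*k) = 2*b := by
    rw [Nat.mul_add_mod, Nat.mod_eq_of_lt (by omega)]
  unfold Em
  rw [if_neg (by omega), hq, hm]
  rw [show (2*b) % 2 = 0 by omega, if_pos rfl, show 2*b/2 = b by omega, if_pos hb]


lemma Em_eval_even_hi (k t b : ℕ) (hk : 1 ≤ k) (h1 : k ≤ b) (h2 : b ≤ 2*k-1) :
    Em k (4*k*t + 2*b) = (t+2)^(b-k) * (t+1)^(k-(b-k)) * (2*t+3)^k := by
  have hq : (4*k*t + 2*b) / (4*k) = t := by
    rw [Nat.mul_add_div (by omega), Nat.div_eq_of_lt (by omega)]; omega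
  have hm : (4*k*t + 2*b) % (4*k) = 2*b := by
    rw [Nat.mul_add_mod, Nat.mod_eq_of_lt (by omega)]
  unfold Em
  rw [if_neg (by omega), hq, hm]
  rw [show (2*b) % 2 = 0 by omega, if_pos rfl, show 2*b/2 = b by omega]
  rcases Nat.eq_or_lt_of_le h1 with he | hlt
  · subst he
    rw [if_pos (le_refl k)]
    simp [Nat.sub_self]
  · rw [if_neg (by omega), show k-(b-k) = 2*k-b by omega]

lemma Em_eval_odd_lo (k t b : ℕ) (hk : 1 ≤ k) (hb : b ≤ k-1) :
    Em k (4*k*t + (2*b+1)) = (t+1)^k * ((2*t+2) * ((2*t+3)^b * (2*t+1)^(k-1-b))) := by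
  have hq : (4*k*t + (2*b+1)) / (4*k) = t := by
    rw [Nat.mul_add_div (by omega), Nat.div_eq_of_lt (by omega)]; omega
  have hm : (4*k*t + (2*b+1)) % (4*k) = 2*b+1 := by
    rw [Nat.mul_add_mod, Nat.mod_eq_of_lt (by omega)]
  unfold Em
  rw [if_neg (by omega), hq, hm]
  rw [show (2*b+1) % 2 = 1 by omega, if_neg (by omega), show (2*b+1)/2 = b by omega,
    if_pos (by omega)]

lemma Em_eval_odd_hi (k t b : ℕ) (hk : 1 ≤ k) (h1 : k ≤ b) (h2 : b ≤ 2*k-1) :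
    Em k (4*k*t + (2*b+1)) = (t+1)^(k-(b-k)) * (t+2)^(b-k) * ((2*t+3)^(k-1) * (2*t+4)) := by
  have hq : (4*k*t + (2*b+1)) / (4*k) = t := by
    rw [Nat.mul_add_div (by omega), Nat.div_eq_of_lt (by omega)]; omega
  have hm : (4*k*t + (2*b+1)) % (4*k) = 2*b+1 := by
    rw [Nat.mul_add_mod, Nat.mod_eq_of_lt (by omega)]
  unfold Em
  rw [if_neg (by omega), hq, hm]
  rw [show (2*b+1) % 2 = 1 by omega, if_neg (by omega), show (2*b+1)/2 = b by omega,
    if_neg (by omega), show 2*k-b = k-(b-k) by omega]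


lemma D1 (k m : ℕ) (hk : 1 ≤ k) :
    Om k (m+1) = Om k m + Em k ((m+1) * (4*k) / (2*k+1)) := by
  have hm1 := Nat.div_add_mod (m+1) (2*k+1)
  have hrlt : (m+1) % (2*k+1) < 2*k+1 := Nat.mod_lt _ (by omega)
  set t := (m+1)/(2*k+1) with ht
  set r := (m+1)%(2*k+1) with hr
  clear_value t r
  rcases Nat.lt_or_ge r 1 with h0 | h1
  · -- r = 0
    have hr0 : r = 0 := by omega
    subst hr0
    obtain ⟨u, rfl⟩ : ∃ u, t = u+1 := by
      refine ⟨t-1, ?_⟩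
      rcases Nat.eq_zero_or_pos t with h | h
      · rw [h] at hm1; simp at hm1
      · omega
    have hmul : (2*k+1)*(u+1) = (2*k+1)*u + (2*k+1) := by ring
    have e1 : m + 1 = (2*k+1)*(u+1) + 0 := by omega
    have e2 : m = (2*k+1)*u + 2*k := by omega
    have p1 : (m+1)*(4*k) = (2*k+1)*(4*k*(u+1) + 2*0) := by rw [e1]; ring
    have hM : (m+1) * (4*k) / (2*k+1) = 4*k*(u+1) + 2*0 :=  by
      rw [p1, Nat.mul_div_cancel_left _ (by omega)]
    rw [hM, Em_eval_even_lo k (u+1) 0 hk (by omega), e1,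
      Om_eval_lo k (u+1) 0 (by omega), e2,
      Om_eval_hi k u (2*k) (by omega) (le_refl _)]
    rw [show 2*k-k = k by omega, show k+1-k = 1 by omega, show k-0 = k by omega]
    ring
  rcases Nat.lt_or_ge r (k+1) with h2 | h3
  · -- 1 ≤ r ≤ k
    obtain ⟨c, rfl⟩ : ∃ c, r = c+1 := ⟨r-1, by omega⟩
    obtain ⟨d, rfl⟩ : ∃ d, k = c+1+d := ⟨k-c-1, by omega⟩
    set k := c+1+d with hkdef
    have e1 : m + 1 = (2*k+1)*t + (c+1) := by omega
    have e2 : m = (2*k+1)*t + c := by omega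
    have p1 : (m+1)*(4*k) = (2*k+1)*(4*k*t + (2*c+1)) + (2*d+1) := by
      rw [e1, hkdef]; ring
    have hM : (m+1) * (4*k) / (2*k+1) = 4*k*t + (2*c+1) := by
      rw [p1, Nat.mul_add_div (by omega), Nat.div_eq_of_lt (by omega), Nat.add_zero]
    rw [hM, Em_eval_odd_lo k t c hk (by omega), e1,
      Om_eval_lo k t (c+1) (by omega), e2, Om_eval_lo k t c (by omega)]
    rw [show k-(c+1) = d by omega, show k-c = d+1 by omega, show k-1-c = d by omega,
      hkdef]
    ring
  · -- k+1 ≤ r ≤ 2k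
    obtain ⟨c, rfl⟩ : ∃ c, r = k+1+c := ⟨r-k-1, by omega⟩
    obtain ⟨d, rfl⟩ : ∃ d, k = c+1+d := ⟨k-c-1, by omega⟩
    set k := c+1+d with hkdef
    have e1 : m + 1 = (2*k+1)*t + (k+1+c) := by omega
    have e2 : m = (2*k+1)*t + (k+c) := by omega
    have p1 : (m+1)*(4*k) = (2*k+1)*(4*k*t + 2*(k+c)) + (2*d+2) := by
      rw [e1, hkdef]; ring
    have hM : (m+1) * (4*k) / (2*k+1) = 4*k*t + 2*(k+c) := by
      rw [p1, Nat.mul_add_div (by omega), Nat.div_eq_of_lt (by omega), Nat.add_zero]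
    rw [hM, Em_eval_even_hi k t (k+c) hk (by omega) (by omega), e1,
      Om_eval_hi k t (k+1+c) (by omega) (by omega), e2,
      Om_eval_hi k t (k+c) (by omega) (by omega)]
    rw [show k+1+c-k = c+1 by omega, show k+1-(c+1) = d+1 by omega,
      show k+c-k = c by omega, show k+1-c = d+2 by omega, show k-c = d+1 by omega,
      hkdef]
    ring


lemma D2 (k m : ℕ) :
    Em (k+1) (m+1) = Em (k+1) m + Om k ((m+1) * (2*k+1) / (4*k+4)) := by
  have hm1 := Nat.div_add_mod (m+1) (4*k+4)
  have hrlt : (m+1) % (4*k+4) < 4*k+4 := Nat.mod_lt _ (by omega)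
  set t := (m+1)/(4*k+4) with ht
  set r := (m+1)%(4*k+4) with hr
  clear_value t r
  rcases Nat.lt_or_ge r 1 with h0 | h1
  · -- (i) r = 0
    have hr0 : r = 0 := by omega
    subst hr0
    obtain ⟨u, rfl⟩ : ∃ u, t = u+1 := by
      refine ⟨t-1, ?_⟩
      rcases Nat.eq_zero_or_pos t with h | h
      · rw [h] at hm1; simp at hm1
      · omega
    have hmul : (4*k+4)*(u+1) = (4*k+4)*u + (4*k+4) := by ring
    have hmul2 : 4*(k+1)*(u+1) = (4*k+4)*(u+1) := by ring
    have hmul3 : 4*(k+1)*u = (4*k+4)*u := by ring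
    have e1 : m + 1 = 4*(k+1)*(u+1) + 2*0 := by omega
    have e2 : m = 4*(k+1)*u + (2*(2*(k+1)-1)+1) := by omega
    have p1 : (m+1)*(2*k+1) = (4*k+4)*((2*k+1)*(u+1) + 0) := by rw [e1]; ring
    have hN : (m+1) * (2*k+1) / (4*k+4) = (2*k+1)*(u+1) + 0 := by
      rw [p1, Nat.mul_div_cancel_left _ (by omega)]
    rw [hN, Om_eval_lo k (u+1) 0 (by omega), e1,
      Em_eval_even_lo (k+1) (u+1) 0 (by omega) (by omega), e2,
      Em_eval_odd_hi (k+1) u (2*(k+1)-1) (by omega) (by omega) (by omega)]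
    rw [show 2*(k+1)-1-(k+1) = k by omega, show k+1-k = 1 by omega,
      show k+1-1 = k by omega, show k+1-0 = k+1 by omega, show k-0 = k by omega]
    ring
  rcases Nat.even_or_odd r with ⟨a, ha⟩ | ⟨a, ha⟩
  · -- r = 2a, a ≥ 1
    obtain ⟨c, rfl⟩ : ∃ c, a = c+1 := ⟨a-1, by omega⟩
    rcases Nat.lt_or_ge c (k+1) with hc | hc
    · -- (iv)
      obtain ⟨d, rfl⟩ : ∃ d, k = c+d := ⟨k-c, by omega⟩
      set k := c+d with hkdef
      have hmul : 4*(k+1)*t = (4*k+4)*t := by ring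
      have e1 : m + 1 = 4*(k+1)*t + 2*(c+1) := by omega
      have e2 : m = 4*(k+1)*t + (2*c+1) := by omega
      have p1 : (m+1)*(2*k+1) = (4*k+4)*((2*k+1)*t + c) + (2*c+4*d+2) := by
        rw [e1, hkdef]; ring
      have hN : (m+1) * (2*k+1) / (4*k+4) = (2*k+1)*t + c := by
        rw [p1, Nat.mul_add_div (by omega), Nat.div_eq_of_lt (by omega), Nat.add_zero]
      rw [hN, Om_eval_lo k t c (by omega), e1,
        Em_eval_even_lo (k+1) t (c+1) (by omega) (by omega), e2,
        Em_eval_odd_lo (k+1) t c (by omega) (by omega)]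
      rw [show k+1-(c+1) = d by omega, show k-c = d by omega,
        show k+1-1-c = d by omega, hkdef]
      ring
    · -- (v)
      obtain ⟨e, rfl⟩ : ∃ e, c = k+1+e := ⟨c-k-1, by omega⟩
      obtain ⟨d, rfl⟩ : ∃ d, k = e+d+1 := ⟨k-e-1, by omega⟩
      set k := e+d+1 with hkdef
      have hmul : 4*(k+1)*t = (4*k+4)*t := by ring
      have e1 : m + 1 = 4*(k+1)*t + 2*(k+1+e+1) := by omega
      have e2 : m = 4*(k+1)*t + (2*(k+1+e)+1) := by omega
      have p1 : (m+1)*(2*k+1) = (4*k+4)*((2*k+1)*t + (k+1+e)) + (2*d+2) := by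
        rw [e1, hkdef]; ring
      have hN : (m+1) * (2*k+1) / (4*k+4) = (2*k+1)*t + (k+1+e) := by
        rw [p1, Nat.mul_add_div (by omega), Nat.div_eq_of_lt (by omega), Nat.add_zero]
      rw [hN, Om_eval_hi k t (k+1+e) (by omega) (by omega), e1,
        Em_eval_even_hi (k+1) t (k+1+e+1) (by omega) (by omega) (by omega), e2,
        Em_eval_odd_hi (k+1) t (k+1+e) (by omega) (by omega) (by omega)]
      rw [show k+1+e+1-(k+1) = e+1 by omega, show k+1-(e+1) = d+1 by omega,
        show k+1+e-(k+1) = e by omega, show k+1-e = d+2 by omega,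
        show k+1+e-k = e+1 by omega, show k+1-(e+1) = d+1 by omega,
        show k+1-1 = k by omega, hkdef]
      ring
  · -- r = 2a+1
    rcases Nat.lt_or_ge a (k+1) with hc | hc
    · -- (ii)
      obtain ⟨d, rfl⟩ : ∃ d, k = a+d := ⟨k-a, by omega⟩
      set k := a+d with hkdef
      have hmul : 4*(k+1)*t = (4*k+4)*t := by ring
      have e1 : m + 1 = 4*(k+1)*t + (2*a+1) := by omega
      have e2 : m = 4*(k+1)*t + 2*a := by omega
      have p1 : (m+1)*(2*k+1) = (4*k+4)*((2*k+1)*t + a) + (2*d+1) := by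
        rw [e1, hkdef]; ring
      have hN : (m+1) * (2*k+1) / (4*k+4) = (2*k+1)*t + a := by
        rw [p1, Nat.mul_add_div (by omega), Nat.div_eq_of_lt (by omega), Nat.add_zero]
      rw [hN, Om_eval_lo k t a (by omega), e1,
        Em_eval_odd_lo (k+1) t a (by omega) (by omega), e2,
        Em_eval_even_lo (k+1) t a (by omega) (by omega)]
      rw [show k+1-1-a = d by omega, show k-a = d by omega,
        show k+1-a = d+1 by omega, hkdef]
      ring
    · -- (iii)
      obtain ⟨c, rfl⟩ : ∃ c, a = k+1+c := ⟨a-k-1, by omega⟩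
      obtain ⟨d, rfl⟩ : ∃ d, k = c+d := ⟨k-c, by omega⟩
      set k := c+d with hkdef
      have hmul : 4*(k+1)*t = (4*k+4)*t := by ring
      have e1 : m + 1 = 4*(k+1)*t + (2*(k+1+c)+1) := by omega
      have e2 : m = 4*(k+1)*t + 2*(k+1+c) := by omega
      have p1 : (m+1)*(2*k+1) = (4*k+4)*((2*k+1)*t + (k+c)) + (2*c+4*d+3) := by
        rw [e1, hkdef]; ring
      have hN : (m+1) * (2*k+1) / (4*k+4) = (2*k+1)*t + (k+c) := by
        rw [p1, Nat.mul_add_div (by omega), Nat.div_eq_of_lt (by omega), Nat.add_zero]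
      rw [hN, Om_eval_hi k t (k+c) (by omega) (by omega), e1,
        Em_eval_odd_hi (k+1) t (k+1+c) (by omega) (by omega) (by omega), e2,
        Em_eval_even_hi (k+1) t (k+1+c) (by omega) (by omega) (by omega)]
      rw [show k+1+c-(k+1) = c by omega, show k+1-c = d+1 by omega,
        show k+c-k = c by omega, show k+1-1 = k by omega,
        show k+1-c = d+1 by omega, hkdef]
      ring


lemma sA_odd (j : ℕ) : sA (2*j+1) = 2*j+1 := by
  unfold sA; rw [if_pos (by omega)]

lemma sA_even (j : ℕ) : sA (2*j) = 4*j := by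
  unfold sA; rw [if_neg (by omega)]; ring

lemma Fcl_odd (k m : ℕ) : Fcl (2*k+1) m = Om k m := by
  unfold Fcl
  rw [show (2*k+1) % 2 = 1 by omega, show (2*k+1)/2 = k by omega, if_neg (by omega)]

lemma Fcl_even (k m : ℕ) : Fcl (2*k) m = Em k m := by
  unfold Fcl
  rw [show (2*k) % 2 = 0 by omega, show (2*k)/2 = k by omega, if_pos rfl]

lemma Em_zero_eval (x : ℕ) : Em 0 x = 1 := by
  unfold Em; rw [if_pos rfl]

lemma Om_zero_eval (x : ℕ) : Om 0 x = x + 1 := by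
  unfold Om
  rw [if_pos (by omega)]
  simp [Nat.mod_one, Nat.div_one]

lemma Fcl_zero (n : ℕ) : Fcl n 0 = 1 := by
  rcases Nat.even_or_odd n with ⟨k, rfl⟩ | ⟨k, rfl⟩
  · rw [show k+k = 2*k by ring, Fcl_even]
    rcases Nat.eq_zero_or_pos k with rfl | hk
    · exact Em_zero_eval 0
    · rw [show (0:ℕ) = 4*k*0 + 2*0 by ring, Em_eval_even_lo k 0 0 hk (by omega)]
      simp
  · rw [Fcl_odd, show (0:ℕ) = (2*k+1)*0 + 0 by ring, Om_eval_lo k 0 0 (by omega)]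
    simp

lemma Fcl_step (n m : ℕ) : Fcl (n+1) (m+1) = Fcl (n+1) m + Fcl n ((m+1) * sA n / sA (n+1)) := by
  rcases Nat.even_or_odd n with ⟨k, rfl⟩ | ⟨k, rfl⟩
  · rw [show k+k = 2*k by ring, Fcl_odd, Fcl_odd, Fcl_even, sA_even, sA_odd]
    rcases Nat.eq_zero_or_pos k with rfl | hk
    · rw [Om_zero_eval, Om_zero_eval, Em_zero_eval]
    · exact D1 k m hk
  · rw [show 2*k+1+1 = 2*(k+1) by ring, Fcl_even, Fcl_even, Fcl_odd, sA_odd,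
      show sA (2*(k+1)) = 4*k+4 by rw [sA_even]; ring]
    exact D2 k m

lemma Fcl_sum (n m : ℕ) : Fcl (n+1) m = ∑ j ∈ Finset.range (m+1), Fcl n (j * sA n / sA (n+1)) := by
  induction m with
  | zero =>
    rw [Finset.sum_range_one, Nat.zero_mul, Nat.zero_div, Fcl_zero, Fcl_zero]
  | succ m ih =>
    rw [Finset.sum_range_succ, ← ih, Fcl_step]

lemma Rrec_eq_F (n m : ℕ) : Rrec n m = Fcl n m := by
  induction n generalizing m with
  | zero => unfold Rrec Fcl Em; simp
  | succ n ih =>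
    rw [show Rrec (n+1) m = ∑ j ∈ Finset.range (m+1), Rrec n (j * sA n / sA (n+1)) from rfl,
      Fcl_sum]
    exact Finset.sum_congr rfl fun j _ => ih _


def cntF (n m : ℕ) : Finset (Fin n → ℕ) :=
  (Fintype.piFinset fun i : Fin n => Finset.range (m * sA ((i : ℕ) + 1) + 1)).filter
    fun lam => (∀ i : Fin n, ∀ h : (i : ℕ) + 1 < n,
        lam i * sA ((i : ℕ) + 2) ≤ lam ⟨(i : ℕ) + 1, h⟩ * sA ((i : ℕ) + 1)) ∧
      ∀ i : Fin n, (i : ℕ) = n - 1 → lam i ≤ m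

lemma sA_pos (c : ℕ) (h : 1 ≤ c) : 1 ≤ sA c := by
  unfold sA; split <;> omega

lemma chain_ratio {n : ℕ} (lam : Fin n → ℕ)
    (hc : ∀ i : Fin n, ∀ h : (i : ℕ) + 1 < n,
      lam i * sA ((i : ℕ) + 2) ≤ lam ⟨(i : ℕ) + 1, h⟩ * sA ((i : ℕ) + 1)) :
    ∀ (j i : Fin n), (i : ℕ) ≤ (j : ℕ) → lam i * sA ((j : ℕ) + 1) ≤ lam j * sA ((i : ℕ) + 1) := by
  suffices H : ∀ d (i j : Fin n), (j : ℕ) = (i : ℕ) + d →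
      lam i * sA ((j : ℕ) + 1) ≤ lam j * sA ((i : ℕ) + 1) by
    intro j i hij
    exact H ((j : ℕ) - (i : ℕ)) i j (by omega)
  intro d
  induction d with
  | zero =>
    intro i j hj
    have : i = j := Fin.ext (by omega)
    subst this
    exact le_refl _
  | succ d ih =>
    intro i j hj
    have hd : (i : ℕ) + d < n := by have := j.isLt; omega
    set j' : Fin n := ⟨(i : ℕ) + d, hd⟩ with hj'
    have h1 : lam i * sA ((i : ℕ) + d + 1) ≤ lam j' * sA ((i : ℕ) + 1) := by
      have := ih i j' rfl
      simpa using this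
    have hlt : ((j' : ℕ)) + 1 < n := by have := j.isLt; simp [hj']; omega
    have h2 := hc j' hlt
    have hjeq : (⟨(j' : ℕ) + 1, hlt⟩ : Fin n) = j := Fin.ext (by simp [hj']; omega)
    rw [hjeq] at h2
    -- h2 : lam j' * sA ((i:ℕ)+d+2) ≤ lam j * sA ((i:ℕ)+d+1)
    have key : lam i * sA ((i : ℕ) + d + 2) * sA ((i : ℕ) + d + 1) ≤
        lam j * sA ((i : ℕ) + 1) * sA ((i : ℕ) + d + 1) := by
      calc lam i * sA ((i : ℕ) + d + 2) * sA ((i : ℕ) + d + 1)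
          = lam i * sA ((i : ℕ) + d + 1) * sA ((i : ℕ) + d + 2) := by ring
        _ ≤ lam j' * sA ((i : ℕ) + 1) * sA ((i : ℕ) + d + 2) :=
            Nat.mul_le_mul_right _ h1
        _ = lam j' * sA ((i : ℕ) + d + 2) * sA ((i : ℕ) + 1) := by ring
        _ ≤ lam j * sA ((i : ℕ) + d + 1) * sA ((i : ℕ) + 1) := by
            apply Nat.mul_le_mul_right
            simpa [hj'] using h2
        _ = lam j * sA ((i : ℕ) + 1) * sA ((i : ℕ) + d + 1) := by ring
    have hres := Nat.le_of_mul_le_mul_right key (by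
      have := sA_pos ((i : ℕ) + d + 1) (by omega); omega)
    rw [show (j : ℕ) + 1 = (i : ℕ) + d + 2 by omega]
    exact hres

lemma lhall_eq_cnt (n t : ℕ) : lhall sA n t = (cntF n (t * sA n)).card := by
  unfold lhall cntF
  congr 1
  ext lam
  simp only [Finset.mem_filter, Fintype.mem_piFinset, Finset.mem_range]
  constructor
  · rintro ⟨hbox, hch⟩
    refine ⟨fun i => ?_, hch, fun i hi => ?_⟩
    · have h1 := hbox i
      have h2 : 1 ≤ sA n := sA_pos n (by have := i.isLt; omega)
      have h3 : t * sA ((i : ℕ) + 1) ≤ t * sA n * sA ((i : ℕ) + 1) := by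
        calc t * sA ((i : ℕ) + 1) = t * 1 * sA ((i : ℕ) + 1) := by ring
          _ ≤ t * sA n * sA ((i : ℕ) + 1) :=
            Nat.mul_le_mul_right _ (Nat.mul_le_mul_left _ h2)
      omega
    · have h1 := hbox i
      have h2 : (i : ℕ) + 1 = n := by have := i.isLt; omega
      rw [h2] at h1; omega
  · rintro ⟨hbox, hch, hlast⟩
    refine ⟨fun i => ?_, hch⟩
    have hn : 1 ≤ n := by have := i.isLt; omega
    have hjlt : n - 1 < n := by omega
    have hrat := chain_ratio lam hch ⟨n - 1, hjlt⟩ i (by simp; omega)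
    have hl : lam ⟨n - 1, hjlt⟩ ≤ t * sA n := hlast ⟨n - 1, hjlt⟩ rfl
    rw [show (((⟨n - 1, hjlt⟩ : Fin n) : ℕ)) + 1 = n by simp; omega] at hrat
    have hpos : 1 ≤ sA n := sA_pos n hn
    have key : lam i * sA n ≤ t * sA ((i : ℕ) + 1) * sA n := by
      calc lam i * sA n ≤ lam ⟨n - 1, hjlt⟩ * sA ((i : ℕ) + 1) := hrat
        _ ≤ (t * sA n) * sA ((i : ℕ) + 1) := Nat.mul_le_mul_right _ hl
        _ = t * sA ((i : ℕ) + 1) * sA n := by ring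
    have := Nat.le_of_mul_le_mul_right key (by omega)
    omega


lemma cnt_zero (m : ℕ) : (cntF 0 m).card = 1 := by
  have h : cntF 0 m = {![]} := by
    ext x
    simp only [cntF, Finset.mem_filter, Fintype.mem_piFinset, Finset.mem_singleton]
    constructor
    · intro _
      funext i; exact i.elim0
    · intro _
      exact ⟨fun i => i.elim0, fun i => i.elim0, fun i => i.elim0⟩
  rw [h, Finset.card_singleton]

lemma cnt_succ (N m : ℕ) :
    (cntF (N+2) m).card = ∑ j ∈ Finset.range (m+1),
      (cntF (N+1) (j * sA (N+1) / sA (N+2))).card := by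
  have hbig : ∀ x ∈ cntF (N+2) m, x ⟨N+1, by omega⟩ ∈ Finset.range (m+1) := by
    intro x hx
    simp only [cntF, Finset.mem_filter] at hx
    exact Finset.mem_range.2 (Nat.lt_succ_of_le (hx.2.2 ⟨N+1, by omega⟩ (by simp)))
  rw [Finset.card_eq_sum_card_fiberwise hbig]
  refine Finset.sum_congr rfl fun j hj => ?_
  have hjm : j ≤ m := Nat.lt_succ_iff.mp (Finset.mem_range.1 hj)
  have hsnpos : 0 < sA (N+2) := sA_pos _ (by omega)
  have hsnpos1 : 0 < sA (N+1) := sA_pos _ (by omega)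
  refine Finset.card_nbij' (fun lam => Fin.init lam) (fun g => Fin.snoc g j) ?_ ?_ ?_ ?_
  · -- forward membership
    intro x hx
    simp only [Finset.mem_coe, Finset.mem_filter, cntF, Fintype.mem_piFinset, Finset.mem_range] at hx ⊢
    obtain ⟨⟨hbox, hch, hlastc⟩, hxj⟩ := hx
    have hstep : x ⟨N, by omega⟩ * sA (N+2) ≤ x ⟨N+1, by omega⟩ * sA (N+1) :=
      hch ⟨N, by omega⟩ (by exact (by omega : N+1 < N+2))
    have hpre : x ⟨N, by omega⟩ ≤ j * sA (N+1) / sA (N+2) := by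
      rw [Nat.le_div_iff_mul_le hsnpos]
      calc x ⟨N, by omega⟩ * sA (N+2) ≤ x ⟨N+1, by omega⟩ * sA (N+1) := hstep
        _ = j * sA (N+1) := by rw [hxj]
    refine ⟨fun i => ?_, fun i h => ?_, fun i hi => ?_⟩
    · -- box
      have hile : (i : ℕ) ≤ N := by have := i.isLt; omega
      have hrat : x (Fin.castSucc i) * sA (N+1) ≤ x ⟨N, by omega⟩ * sA ((i : ℕ) + 1) :=
        chain_ratio x hch ⟨N, by omega⟩ (Fin.castSucc i) hile
      have h1 : x (Fin.castSucc i) * sA (N+1) ≤ (j * sA (N+1) / sA (N+2)) * sA ((i : ℕ) + 1) :=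
        hrat.trans (Nat.mul_le_mul_right _ hpre)
      have h2 : x (Fin.castSucc i) ≤ x (Fin.castSucc i) * sA (N+1) :=
        Nat.le_mul_of_pos_right _ hsnpos1
      have : Fin.init x i = x (Fin.castSucc i) := rfl
      rw [this]
      omega
    · -- chain
      exact hch (Fin.castSucc i) (by exact (by have := i.isLt; omega : (i : ℕ) + 1 < N + 2))
    · -- last
      have hie : i = (⟨N, by omega⟩ : Fin (N+1)) := Fin.ext (show (i : ℕ) = N by omega)
      rw [hie]
      exact hpre
  · -- backward membership
    intro g hg
    simp only [Finset.mem_coe, Finset.mem_filter, cntF, Fintype.mem_piFinset, Finset.mem_range] at hg ⊢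
    obtain ⟨hbox, hch, hlastc⟩ := hg
    have hsnocv : ∀ (i' : Fin (N+2)) (hv : (i' : ℕ) < N+1),
        (Fin.snoc g j : Fin (N+2) → ℕ) i' = g ⟨(i' : ℕ), hv⟩ := by
      intro i' hv
      have he : i' = Fin.castSucc ⟨(i' : ℕ), hv⟩ := Fin.ext rfl
      conv_lhs => rw [he]
      rw [Fin.snoc_castSucc]
    have hsnocl : ∀ (i' : Fin (N+2)), (i' : ℕ) = N+1 → (Fin.snoc g j : Fin (N+2) → ℕ) i' = j := by
      intro i' hv
      have he : i' = Fin.last (N+1) := Fin.ext (by simpa using hv)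
      rw [he, Fin.snoc_last]
    have hgl : g ⟨N, by omega⟩ ≤ j * sA (N+1) / sA (N+2) := hlastc ⟨N, by omega⟩ rfl
    have hdiv : g ⟨N, by omega⟩ * sA (N+2) ≤ j * sA (N+1) :=
      (Nat.le_div_iff_mul_le hsnpos).1 hgl
    have hcross : ∀ i : Fin (N+1), g i * sA (N+2) ≤ j * sA ((i : ℕ) + 1) := by
      intro i
      have hrat : g i * sA (N+1) ≤ g ⟨N, by omega⟩ * sA ((i : ℕ) + 1) :=
        chain_ratio g hch ⟨N, by omega⟩ i (by exact (by have := i.isLt; omega : (i : ℕ) ≤ N) : (i : ℕ) ≤ ((⟨N, by omega⟩ : Fin (N+1)) : ℕ))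
      have key : g i * sA (N+2) * sA (N+1) ≤ j * sA ((i : ℕ) + 1) * sA (N+1) := by
        calc g i * sA (N+2) * sA (N+1) = g i * sA (N+1) * sA (N+2) := by ring
          _ ≤ g ⟨N, by omega⟩ * sA ((i : ℕ) + 1) * sA (N+2) := Nat.mul_le_mul_right _ hrat
          _ = g ⟨N, by omega⟩ * sA (N+2) * sA ((i : ℕ) + 1) := by ring
          _ ≤ j * sA (N+1) * sA ((i : ℕ) + 1) := Nat.mul_le_mul_right _ hdiv
          _ = j * sA ((i : ℕ) + 1) * sA (N+1) := by ring
      exact Nat.le_of_mul_le_mul_right key hsnpos1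
    refine ⟨⟨fun i => ?_, fun i h => ?_, fun i hi => ?_⟩, ?_⟩
    · -- box
      rcases Nat.lt_or_ge ((i : ℕ)) (N+1) with hv | hv
      · rw [hsnocv i hv]
        have h1 := hcross ⟨(i : ℕ), hv⟩
        have h2 : g ⟨(i : ℕ), hv⟩ ≤ g ⟨(i : ℕ), hv⟩ * sA (N+2) :=
          Nat.le_mul_of_pos_right _ hsnpos
        have h3 : j * sA ((i : ℕ) + 1) ≤ m * sA ((i : ℕ) + 1) :=
          Nat.mul_le_mul_right _ hjm
        simp only at h1
        omega
      · have hveq : (i : ℕ) = N+1 := by have := i.isLt; omega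
        rw [hsnocl i hveq]
        have h4 : 1 ≤ sA ((i : ℕ) + 1) := sA_pos _ (by omega)
        have h5 : m * 1 ≤ m * sA ((i : ℕ) + 1) := Nat.mul_le_mul_left _ h4
        omega
    · -- chain
      rcases Nat.lt_or_ge ((i : ℕ) + 1) (N+1) with hv | hv
      · rw [hsnocv i (by omega), hsnocv ⟨(i : ℕ) + 1, h⟩ (by simpa using hv)]
        exact hch ⟨(i : ℕ), by omega⟩ (by simpa using hv)
      · have hveq : (i : ℕ) = N := by omega
        rw [hsnocv i (by omega), hsnocl ⟨(i : ℕ) + 1, h⟩ (by simpa using hveq)]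
        have heq : (⟨(i : ℕ), by omega⟩ : Fin (N+1)) = ⟨N, by omega⟩ := Fin.ext (by simpa using hveq)
        rw [heq, show (i : ℕ) + 2 = N + 2 by omega, show (i : ℕ) + 1 = N + 1 by omega]
        exact hdiv
    · -- last
      have hveq : (i : ℕ) = N+1 := by simpa using hi
      rw [hsnocl i hveq]
      exact hjm
    · -- fiber
      have he : (⟨N+1, by omega⟩ : Fin (N+2)) = Fin.last (N+1) := Fin.ext rfl
      rw [he, Fin.snoc_last]
  · -- left inverse
    intro x hx
    have hxj : x ⟨N+1, by omega⟩ = j := (Finset.mem_filter.1 hx).2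
    rw [← hxj]
    have he : (⟨N+1, by omega⟩ : Fin (N+2)) = Fin.last (N+1) := Fin.ext rfl
    rw [he]
    exact Fin.snoc_init_self x
  · -- right inverse
    intro g hg
    exact Fin.init_snoc (α := fun _ : Fin (N+2) => ℕ) (n := N+1) j g


lemma cnt_one (m : ℕ) : (cntF 1 m).card = m + 1 := by
  have hs1 : sA 1 = 1 := by unfold sA; norm_num
  rw [show m + 1 = (Finset.range (m+1)).card from (Finset.card_range (m+1)).symm]
  refine Finset.card_nbij' (fun lam => lam ⟨0, by omega⟩) (fun v => fun _ => v) ?_ ?_ ?_ ?_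
  · intro x hx
    simp only [Finset.mem_coe, cntF, Finset.mem_filter, Fintype.mem_piFinset, Finset.mem_range] at hx ⊢
    exact Nat.lt_succ_of_le (hx.2.2 ⟨0, by omega⟩ rfl)
  · intro v hv
    simp only [Finset.mem_coe, cntF, Finset.mem_filter, Fintype.mem_piFinset, Finset.mem_range] at hv ⊢
    refine ⟨fun i => ?_, fun i h => by omega, fun i hi => by omega⟩
    have h1 : 1 ≤ sA ((i : ℕ) + 1) := sA_pos _ (by omega)
    have h2 : m * 1 ≤ m * sA ((i : ℕ) + 1) := Nat.mul_le_mul_left _ h1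
    omega
  · intro x hx
    funext i
    have : i = (⟨0, by omega⟩ : Fin 1) := Fin.ext (by omega)
    rw [this]
  · intro v hv
    rfl

lemma cnt_card (n m : ℕ) : (cntF n m).card = Rrec n m := by
  induction n generalizing m with
  | zero => rw [cnt_zero]; rfl
  | succ n ih =>
    cases n with
    | zero =>
      rw [cnt_one]
      show m + 1 = ∑ j ∈ Finset.range (m+1), Rrec 0 (j * sA 0 / sA 1)
      simp [Rrec]
    | succ N =>
      rw [cnt_succ]
      show _ = ∑ j ∈ Finset.range (m+1), Rrec (N+1) (j * sA (N+1) / sA (N+2))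
      exact Finset.sum_congr rfl fun j _ => ih _


theorem stmt17 (n t : ℕ) :
    lhall sA n t = (t + 1) ^ ((n + 1) / 2) * (2 * t + 1) ^ (n / 2) := by
  rw [lhall_eq_cnt, cnt_card, Rrec_eq_F]
  rcases Nat.even_or_odd n with ⟨k, rfl⟩ | ⟨k, rfl⟩
  · rw [show k + k = 2*k by ring, Fcl_even, sA_even,
      show (2*k+1)/2 = k by omega, show (2*k)/2 = k by omega]
    rcases Nat.eq_zero_or_pos k with rfl | hk
    · simp [Em_zero_eval]
    · rw [show t * (4*k) = 4*k*t + 2*0 by ring, Em_eval_even_lo k t 0 hk (by omega)]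
      simp
  · rw [Fcl_odd, sA_odd, show (2*k+1+1)/2 = k+1 by omega, show (2*k+1)/2 = k by omega,
      show t * (2*k+1) = (2*k+1)*t + 0 by ring, Om_eval_lo k t 0 (by omega)]
    simp

end LHall17
end
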